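/- arXiv:0904.3743 — 5 statements merged into one kernel-verified Lean document; each statement's English description precedes it below -/
import Mathlib

section
/- Let M be a proper, nontrivial, graded submodule of A^λ. Then either M = A^{λ,k} for some k ∈ χ_λ, or M = A^{λ,k} ⊕ A^{λ,k'} for some k, k' ∈ χ_λ with k ≤ 0 < k'. -/
noncomputable section

/-- A realization of the generalized Weyl algebra `T(R,σ,v)`:
a `ℤ`-graded `ℂ`-algebra `A` containing `R` in degree `0`, with elements
`t₊` of degree `1` and `t₋` of degree `-1` satisfying the GWA relations, such that each
homogeneous component `A_n` is free of rank one as a left `R`-module with basis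
`t₊^n` (for `n ≥ 0`) resp. `t₋^{-n}` (for `n ≤ 0`). -/
structure GWA (R : Type) [CommRing R] [Algebra ℂ R] (σ : R ≃ₐ[ℂ] R) (v : R) : Type 1 where
  A : Type
  [ringA : Ring A]
  [algA : Algebra ℂ A]
  emb : R →ₐ[ℂ] A
  tp : A
  tm : A
  rel1 : ∀ r : R, emb r * tp = tp * emb (σ r)
  rel2 : ∀ r : R, emb (σ r) * tm = tm * emb r
  rel3 : tm * tp = emb (σ v)
  rel4 : tp * tm = emb v
  deg : ℤ → AddSubgroup A
  algmap_mem : ∀ c : ℂ, algebraMap ℂ A c ∈ deg 0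
  emb_mem : ∀ r : R, emb r ∈ deg 0
  tp_mem : tp ∈ deg 1
  tm_mem : tm ∈ deg (-1)
  mul_mem : ∀ {i j : ℤ} {a b : A}, a ∈ deg i → b ∈ deg j → a * b ∈ deg (i + j)
  decomp : ∀ a : A, ∃ (s : Finset ℤ) (g : ℤ → A), (∀ i, g i ∈ deg i) ∧ a = ∑ i ∈ s, g i
  indep : ∀ (s : Finset ℤ) (g : ℤ → A), (∀ i, g i ∈ deg i) → (∑ i ∈ s, g i) = 0 →
    ∀ i ∈ s, g i = 0
  free_pos : ∀ n : ℕ, ∀ a ∈ deg (n : ℤ), ∃! r : R, a = emb r * tp ^ n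
  free_neg : ∀ n : ℕ, ∀ a ∈ deg (-(n : ℤ)), ∃! r : R, a = emb r * tm ^ n

attribute [instance] GWA.ringA GWA.algA

variable {R : Type} [CommRing R] [Algebra ℂ R] {σ : R ≃ₐ[ℂ] R} {v : R}

/-- A `ℤ`-graded left module over (a realization of) a generalized Weyl algebra. -/
structure GradedMod (G : GWA R σ v) : Type 1 where
  M : Type
  [acg : AddCommGroup M]
  [mod : Module G.A M]
  deg : ℤ → AddSubgroup M
  smul_mem : ∀ {i j : ℤ} {a : G.A} {m : M}, a ∈ G.deg i → m ∈ deg j → a • m ∈ deg (i + j)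
  decomp : ∀ m : M, ∃ (s : Finset ℤ) (g : ℤ → M), (∀ i, g i ∈ deg i) ∧ m = ∑ i ∈ s, g i
  indep : ∀ (s : Finset ℤ) (g : ℤ → M), (∀ i, g i ∈ deg i) → (∑ i ∈ s, g i) = 0 →
    ∀ i ∈ s, g i = 0

attribute [instance] GradedMod.acg GradedMod.mod

variable {G : GWA R σ v}

/-- A homomorphism of graded modules that shifts degrees by `n`, i.e. an element of
`Hom_gr(X, Y[n])`. -/
structure GHom (X Y : GradedMod G) (n : ℤ) : Type where
  toLin : X.M →ₗ[G.A] Y.M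
  map_deg : ∀ i : ℤ, ∀ m ∈ X.deg i, toLin m ∈ Y.deg (i + n)

/-- `X` is isomorphic to `Y[n]` as a graded module. -/
def GIso (X Y : GradedMod G) (n : ℤ) : Prop :=
  ∃ f : GHom X Y n, Function.Bijective f.toLin

/-- A submodule is graded if every element of it is a sum of homogeneous elements of it. -/
def IsGradedSub (X : GradedMod G) (N : Submodule G.A X.M) : Prop :=
  ∀ m ∈ N, ∃ (s : Finset ℤ) (g : ℤ → X.M),
    (∀ i, g i ∈ X.deg i) ∧ (∀ i, g i ∈ N) ∧ m = ∑ i ∈ s, g i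

/-- `χ_λ = {k ∈ ℤ : σ^k(v) ∈ λ}`. -/
def chiSet (σ : R ≃ₐ[ℂ] R) (v : R) (lam : Ideal R) : Set ℤ := {k : ℤ | (σ ^ k) v ∈ lam}

/-- `X` is (a realization of) the graded module `A^λ = A/Aλ`: it is cyclic, generated by a
degree-zero element whose annihilator is the left ideal generated by `λ`. -/
def IsStdMod (G : GWA R σ v) (lam : Ideal R) (X : GradedMod G) : Prop :=
  ∃ x ∈ X.deg 0, Submodule.span G.A {x} = ⊤ ∧
    ∀ a : G.A, a • x = 0 ↔ a ∈ Submodule.span G.A (G.emb '' (lam : Set R))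

/-- A graded module is simple if it is nonzero and has no proper nontrivial graded submodules. -/
def IsSimpleGr (X : GradedMod G) : Prop :=
  (∃ m : X.M, m ≠ 0) ∧ ∀ N : Submodule G.A X.M, IsGradedSub X N → N = ⊥ ∨ N = ⊤

/-- Artinian graded module : the descending chain condition on graded submodules. -/
def IsArtinianGr (X : GradedMod G) : Prop :=
  ∀ f : ℕ → Submodule G.A X.M, (∀ n, IsGradedSub X (f n)) →
    (∀ n, f (n + 1) ≤ f n) → ∃ n, ∀ m, n ≤ m → f m = f n

/-- `Y` is a graded subquotient of `X`. -/
def IsSubquotient (X Y : GradedMod G) : Prop :=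
  ∃ (Q P : Submodule G.A X.M), IsGradedSub X Q ∧ IsGradedSub X P ∧ P ≤ Q ∧
    ∃ φ : Q →ₗ[G.A] Y.M, Function.Surjective φ ∧
      (∀ q : Q, φ q = 0 ↔ (q : X.M) ∈ P) ∧
      (∀ (i : ℤ) (q : Q), (q : X.M) ∈ X.deg i → φ q ∈ Y.deg i)

/-- The (additive) span of the homogeneous components of `X` in degrees belonging to `S`. -/
def spanDegs (X : GradedMod G) (S : Set ℤ) : AddSubgroup X.M :=
  ⨆ i ∈ S, X.deg i

/-- The submodule `A^{λ,k}` of `A^λ`: the span of the components in degrees `< k` if `k ≤ 0`,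
and in degrees `≥ k` if `k > 0`. -/
def stdPart (X : GradedMod G) (k : ℤ) : AddSubgroup X.M :=
  if k ≤ 0 then spanDegs X {i : ℤ | i < k} else spanDegs X {i : ℤ | k ≤ i}


namespace Stmt0Aux

variable {R : Type} [CommRing R] [Algebra ℂ R] {σ : R ≃ₐ[ℂ] R} {v : R}

/-- canonical basis element of degree `i` -/
def bas (G : GWA R σ v) (i : ℤ) : G.A :=
  if 0 ≤ i then G.tp ^ i.toNat else G.tm ^ (-i).toNat

variable {G : GWA R σ v}

lemma bas_nonneg {i : ℤ} (h : 0 ≤ i) : bas G i = G.tp ^ i.toNat := if_pos h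

lemma bas_neg {i : ℤ} (h : i < 0) : bas G i = G.tm ^ (-i).toNat := if_neg (not_le.2 h)

lemma emb_tp_pow (r : R) (n : ℕ) : G.emb r * G.tp ^ n = G.tp ^ n * G.emb ((σ ^ n) r) := by
  induction n generalizing r with
  | zero => simp
  | succ n ih =>
      rw [pow_succ', ← mul_assoc, G.rel1, mul_assoc, ih, pow_succ', mul_assoc]
      congr 2
      rw [← pow_succ', pow_succ]
      rfl

lemma emb_tm (r : R) : G.emb r * G.tm = G.tm * G.emb (σ⁻¹ r) := by
  have := G.rel2 (σ⁻¹ r)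
  rwa [show σ (σ⁻¹ r) = r from σ.apply_symm_apply r] at this

lemma emb_tm_pow (r : R) (n : ℕ) : G.emb r * G.tm ^ n = G.tm ^ n * G.emb ((σ⁻¹ ^ n) r) := by
  induction n generalizing r with
  | zero => simp
  | succ n ih =>
      rw [pow_succ', ← mul_assoc, emb_tm, mul_assoc, ih, pow_succ', mul_assoc]
      congr 2
      rw [← pow_succ', pow_succ]
      rfl

lemma emb_bas (r : R) (i : ℤ) : G.emb r * bas G i = bas G i * G.emb ((σ ^ i) r) := by
  rcases le_or_gt 0 i with h | h
  · rw [bas_nonneg h, emb_tp_pow]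
    congr 2
    rw [← zpow_natCast σ i.toNat, Int.toNat_of_nonneg h]
  · rw [bas_neg h, emb_tm_pow]
    congr 2
    rw [inv_pow, ← zpow_natCast σ ((-i).toNat), ← zpow_neg,
      Int.toNat_of_nonneg (by omega : (0:ℤ) ≤ -i), neg_neg]

lemma tp_bas_nonneg {i : ℤ} (h : 0 ≤ i) : G.tp * bas G i = bas G (i+1) := by
  rw [bas_nonneg h, bas_nonneg (by omega : (0:ℤ) ≤ i + 1),
    show (i+1).toNat = i.toNat + 1 by omega, pow_succ']

lemma tm_bas_nonpos {i : ℤ} (h : i ≤ 0) : G.tm * bas G i = bas G (i-1) := by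
  rcases eq_or_lt_of_le h with rfl | h'
  · rw [bas_nonneg le_rfl, bas_neg (by omega : (0:ℤ) - 1 < 0)]
    norm_num
  · rw [bas_neg h', bas_neg (by omega : i - 1 < 0),
      show (-(i-1)).toNat = (-i).toNat + 1 by omega, pow_succ']

lemma tm_bas_pos {i : ℤ} (h : 1 ≤ i) : G.tm * bas G i = G.emb (σ v) * bas G (i-1) := by
  rw [bas_nonneg (by omega : (0:ℤ) ≤ i), bas_nonneg (by omega : (0:ℤ) ≤ i - 1),
    show i.toNat = (i-1).toNat + 1 by omega, pow_succ', ← mul_assoc, G.rel3]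

lemma tp_bas_neg {i : ℤ} (h : i ≤ -1) : G.tp * bas G i = G.emb v * bas G (i+1) := by
  have hb : G.tm ^ (-(i+1)).toNat = bas G (i+1) := by
    rcases lt_or_eq_of_le (by omega : i + 1 ≤ 0) with h' | h'
    · rw [bas_neg h']
    · rw [h', bas_nonneg le_rfl]
      norm_num
  rw [bas_neg (by omega : i < 0), show (-i).toNat = (-(i+1)).toNat + 1 by omega,
    pow_succ', ← mul_assoc, G.rel4, hb]

variable {X : GradedMod G}

lemma uniq (X : GradedMod G) (s : Finset ℤ) (g : ℤ → X.M) (hg : ∀ i, g i ∈ X.deg i)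
    (i₀ : ℤ) (hm : (∑ i ∈ s, g i) ∈ X.deg i₀) : ∀ j ∈ s, j ≠ i₀ → g j = 0 := by
  classical
  intro j hj hji
  set m := ∑ i ∈ s, g i with hmdef
  set g' : ℤ → X.M := fun i => (if i ∈ s then g i else 0) - (if i = i₀ then m else 0) with hg'
  have hg'deg : ∀ i, g' i ∈ X.deg i := by
    intro i
    refine sub_mem ?_ ?_
    · split <;> [exact hg i; exact zero_mem _]
    · split
      · next hii => exact hii ▸ hm
      · exact zero_mem _
  have hsum : ∑ i ∈ insert i₀ s, g' i = 0 := by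
    rw [Finset.sum_sub_distrib]
    have e1 : ∑ i ∈ insert i₀ s, (if i ∈ s then g i else 0) = m := by
      rw [← Finset.sum_subset (Finset.subset_insert i₀ s)
        (by intro y hy hys; simp [hys])]
      exact Finset.sum_congr rfl fun i hi => if_pos hi
    have e2 : ∑ i ∈ insert i₀ s, (if i = i₀ then m else 0) = m := by
      rw [Finset.sum_ite_eq' (insert i₀ s) i₀ (fun _ => m),
        if_pos (Finset.mem_insert_self i₀ s)]
    rw [e1, e2, sub_self]
  have := X.indep (insert i₀ s) g' hg'deg hsum j (Finset.mem_insert_of_mem hj)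
  simpa only [g', if_pos hj, if_neg hji, sub_zero] using this

lemma elt (x : X.M) (hx0 : x ∈ X.deg 0)
    (hspan : Submodule.span G.A {x} = ⊤) (i : ℤ) (m : X.M) (hm : m ∈ X.deg i) :
    ∃ r : R, m = (G.emb r * bas G i) • x := by
  classical
  have hmem : m ∈ Submodule.span G.A {x} := hspan ▸ Submodule.mem_top
  obtain ⟨a, ha⟩ := Submodule.mem_span_singleton.1 hmem
  obtain ⟨s, f, hf, hfa⟩ := G.decomp a
  have hsum : m = ∑ j ∈ s, f j • x := by rw [← ha, hfa, Finset.sum_smul]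
  have hdeg : ∀ j, f j • x ∈ X.deg j := fun j => by
    simpa using X.smul_mem (hf j) hx0
  have hz : ∀ j ∈ s, j ≠ i → f j • x = 0 := uniq X s _ hdeg i (hsum ▸ hm)
  by_cases hi : i ∈ s
  · have hmi : m = f i • x := by
      rw [hsum]; exact Finset.sum_eq_single_of_mem i hi hz
    rcases le_or_gt 0 i with h | h
    · obtain ⟨r, hr, -⟩ := G.free_pos i.toNat (f i)
        (by rw [Int.toNat_of_nonneg h]; exact hf i)
      exact ⟨r, by rw [hmi, hr, bas_nonneg h]⟩
    · obtain ⟨r, hr, -⟩ := G.free_neg (-i).toNat (f i)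
        (by rw [Int.toNat_of_nonneg (by omega : (0:ℤ) ≤ -i), neg_neg]; exact hf i)
      exact ⟨r, by rw [hmi, hr, bas_neg h]⟩
  · refine ⟨0, ?_⟩
    rw [hsum, Finset.sum_eq_zero (fun j hj => hz j hj (fun hji => hi (hji ▸ hj))),
      map_zero, zero_mul, zero_smul]

lemma key {lam : Ideal R} (hlam : lam.IsMaximal) (x : X.M)
    (hann : ∀ a : G.A, a • x = 0 ↔ a ∈ Submodule.span G.A (G.emb '' (lam : Set R)))
    (N : Submodule G.A X.M) (i : ℤ) (r : R) (hr : (σ ^ i) r ∉ lam)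
    (hm : (G.emb r * bas G i) • x ∈ N) : bas G i • x ∈ N := by
  obtain ⟨b, c, hc, hbc⟩ := hlam.exists_inv hr
  have hann' : ∀ l ∈ lam, G.emb l • x = 0 := fun l hl =>
    (hann _).2 (Submodule.subset_span ⟨l, hl, rfl⟩)
  have e1 : G.emb ((σ ^ (-i)) b) * (G.emb r * bas G i) = bas G i * G.emb (1 - c) := by
    rw [← mul_assoc, ← map_mul, emb_bas]
    congr 1
    rw [map_mul]
    have h1 : (σ ^ i) ((σ ^ (-i)) b) = b := by
      rw [← AlgEquiv.mul_apply, ← zpow_add, add_neg_cancel, zpow_zero, AlgEquiv.one_apply]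
    rw [h1]
    congr 1
    linear_combination hbc
  have h3 : G.emb ((σ ^ (-i)) b) • ((G.emb r * bas G i) • x) = bas G i • x := by
    rw [← mul_smul, e1, mul_smul, map_sub, map_one, sub_smul, one_smul,
      hann' c hc, sub_zero]
  exact h3 ▸ N.smul_mem _ hm

end Stmt0Aux

/-- Every proper nontrivial graded submodule of `A^λ` is `A^{λ,k}` for some
`k ∈ χ_λ`, or `A^{λ,k} ⊕ A^{λ,k'}` for some `k, k' ∈ χ_λ` with `k ≤ 0 < k'`. -/
theorem stmt0 {R : Type} [CommRing R] [Algebra ℂ R] (hfg : Algebra.FiniteType ℂ R)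
    {σ : R ≃ₐ[ℂ] R} {v : R} (G : GWA R σ v)
    (lam : Ideal R) (hlam : lam.IsMaximal)
    (X : GradedMod G) (hX : IsStdMod G lam X)
    (N : Submodule G.A X.M) (hN : IsGradedSub X N) (hbot : N ≠ ⊥) (htop : N ≠ ⊤) :
    (∃ k ∈ chiSet σ v lam, N.toAddSubgroup = stdPart X k) ∨
    (∃ k ∈ chiSet σ v lam, ∃ k' ∈ chiSet σ v lam, k ≤ 0 ∧ 0 < k' ∧
      N.toAddSubgroup = stdPart X k ⊔ stdPart X k') := by
  classical
  open Stmt0Aux in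
  obtain ⟨x, hx0, hspan, hann⟩ := hX
  set S : Set ℤ := {i : ℤ | bas G i • x ∈ N} with hSdef
  -- membership lemmas
  have memN : ∀ i ∈ S, ∀ m ∈ X.deg i, m ∈ N := by
    intro i hi m hm
    obtain ⟨r, rfl⟩ := elt x hx0 hspan i m hm
    rw [mul_smul]
    exact N.smul_mem _ hi
  have pieceS : ∀ (i : ℤ) (m : X.M), m ∈ X.deg i → m ∈ N → m ≠ 0 → i ∈ S := by
    intro i m hm hmN hm0
    obtain ⟨r, rfl⟩ := elt x hx0 hspan i m hm
    have hr : (σ ^ i) r ∉ lam := by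
      intro hr
      apply hm0
      rw [emb_bas, mul_smul, (hann _).2 (Submodule.subset_span ⟨_, hr, rfl⟩), smul_zero]
    exact key hlam x hann N i r hr hmN
  have up : ∀ i : ℤ, 0 ≤ i → i ∈ S → (i+1) ∈ S := by
    intro i h hi
    have e : bas G (i+1) • x = G.tp • (bas G i • x) := by
      rw [← mul_smul, tp_bas_nonneg h]
    show bas G (i+1) • x ∈ N
    rw [e]
    exact N.smul_mem _ hi
  have down : ∀ i : ℤ, i ≤ 0 → i ∈ S → (i-1) ∈ S := by
    intro i h hi
    have e : bas G (i-1) • x = G.tm • (bas G i • x) := by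
      rw [← mul_smul, tm_bas_nonpos h]
    show bas G (i-1) • x ∈ N
    rw [e]
    exact N.smul_mem _ hi
  have downχ : ∀ i : ℤ, 1 ≤ i → i ∈ S → (σ ^ i) v ∉ lam → (i-1) ∈ S := by
    intro i h hi hv
    have h1 : (G.emb (σ v) * bas G (i-1)) • x ∈ N := by
      rw [← tm_bas_pos h, mul_smul]
      exact N.smul_mem _ hi
    refine key hlam x hann N (i-1) (σ v) ?_ h1
    have e : (σ ^ (i-1)) (σ v) = (σ ^ i) v := by
      rw [show σ v = (σ ^ (1:ℤ)) v from rfl, ← AlgEquiv.mul_apply, ← zpow_add,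
        sub_add_cancel]
    rwa [e]
  have upχ : ∀ i : ℤ, i ≤ -1 → i ∈ S → (σ ^ (i+1)) v ∉ lam → (i+1) ∈ S := by
    intro i h hi hv
    have h1 : (G.emb v * bas G (i+1)) • x ∈ N := by
      rw [← tp_bas_neg h, mul_smul]
      exact N.smul_mem _ hi
    exact key hlam x hann N (i+1) v hv h1
  have hS0 : (0:ℤ) ∉ S := by
    intro h0
    apply htop
    rw [eq_top_iff]
    intro m _
    have hall : ∀ i : ℤ, i ∈ S := by
      intro i
      rcases le_or_gt 0 i with h | h
      · exact Int.le_induction h0 (fun n hn hns => up n hn hns) i h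
      · exact Int.le_induction_down h0 (fun n hn hns => down n hn hns) i h.le
    obtain ⟨s, g, hg, rfl⟩ := X.decomp m
    exact Submodule.sum_mem _ (fun j _ => memN j (hall j) _ (hg j))
  -- there is a nonzero degree in S
  have hSne : ∃ j, j ∈ S ∧ j ≠ 0 := by
    obtain ⟨m0, hm0N, hm00⟩ := (Submodule.ne_bot_iff N).1 hbot
    obtain ⟨s, g, hgdeg, hgN, hsum⟩ := hN m0 hm0N
    have hj : ∃ j ∈ s, g j ≠ 0 := by
      by_contra hc
      push_neg at hc
      exact hm00 (hsum.trans (Finset.sum_eq_zero hc))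
    obtain ⟨j, hjs, hj0⟩ := hj
    have hjS := pieceS j (g j) (hgdeg j) (hgN j) hj0
    exact ⟨j, hjS, fun h => hS0 (h ▸ hjS)⟩
  -- general lemmas to finish
  have degLe : ∀ T : Set ℤ, (∀ i ∈ T, i ∈ S) → spanDegs X T ≤ N.toAddSubgroup := by
    intro T hT
    refine iSup₂_le fun i hi => ?_
    intro m hm
    exact Submodule.mem_toAddSubgroup N |>.2 (memN i (hT i hi) m hm)
  have memSpan : ∀ (T : Set ℤ) (i : ℤ), i ∈ T → ∀ m ∈ X.deg i, m ∈ spanDegs X T := by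
    intro T i hi m hm
    exact le_iSup₂ (f := fun i (_ : i ∈ T) => X.deg i) i hi hm
  -- case analysis
  by_cases hpos : ∃ i, i ∈ S ∧ 1 ≤ i
  · obtain ⟨k', ⟨hk'S, hk'1⟩, hk'min⟩ :=
      Int.exists_least_of_bdd (P := fun i => i ∈ S ∧ 1 ≤ i) ⟨1, fun z hz => hz.2⟩ hpos
    have hk'χ : k' ∈ chiSet σ v lam := by
      by_contra hχ
      have hprev := downχ k' hk'1 hk'S hχ
      rcases eq_or_lt_of_le hk'1 with h1 | h1
      · exact hS0 (by rwa [← h1, sub_self] at hprev)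
      · have := hk'min (k'-1) ⟨hprev, by omega⟩
        omega
    have posMem : ∀ i : ℤ, k' ≤ i → i ∈ S :=
      fun i hi => Int.le_induction hk'S (fun n hn hns => up n (by omega) hns) i hi
    by_cases hneg : ∃ i, i ∈ S ∧ i ≤ -1
    · -- both sides
      obtain ⟨m₀, ⟨hm₀S, hm₀1⟩, hm₀max⟩ :=
        Int.exists_greatest_of_bdd (P := fun i => i ∈ S ∧ i ≤ -1) ⟨-1, fun z hz => hz.2⟩ hneg
      set k := m₀ + 1 with hk
      have hk0 : k ≤ 0 := by omega
      have hkχ : k ∈ chiSet σ v lam := by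
        by_contra hχ
        have hnext := upχ m₀ hm₀1 hm₀S hχ
        rcases eq_or_lt_of_le (show k ≤ 0 from hk0) with h1 | h1
        · exact hS0 (h1 ▸ hnext)
        · have := hm₀max k ⟨hnext, by omega⟩
          omega
      have negMem : ∀ i : ℤ, i ≤ m₀ → i ∈ S :=
        fun i hi => Int.le_induction_down hm₀S (fun n hn hns => down n (by omega) hns) i hi
      refine Or.inr ⟨k, hkχ, k', hk'χ, hk0, by omega, ?_⟩
      have hstdk : stdPart X k = spanDegs X {i : ℤ | i < k} := if_pos hk0
      have hstdk' : stdPart X k' = spanDegs X {i : ℤ | k' ≤ i} := if_neg (by omega)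
      refine le_antisymm ?_ ?_
      · intro m hm
        rw [Submodule.mem_toAddSubgroup] at hm
        obtain ⟨s, g, hgdeg, hgN, hsum⟩ := hN m hm
        rw [hsum]
        refine AddSubgroup.sum_mem _ fun j _ => ?_
        by_cases hgj : g j = 0
        · rw [hgj]; exact zero_mem _
        · have hjS := pieceS j (g j) (hgdeg j) (hgN j) hgj
          have hj0 : j ≠ 0 := fun h => hS0 (h ▸ hjS)
          rcases lt_or_ge j 0 with hjlt | hjge
          · have : j < k := by have := hm₀max j ⟨hjS, by omega⟩; omega
            exact AddSubgroup.mem_sup_left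
              (hstdk ▸ memSpan {i : ℤ | i < k} j this _ (hgdeg j))
          · have : k' ≤ j := hk'min j ⟨hjS, by omega⟩
            exact AddSubgroup.mem_sup_right
              (hstdk' ▸ memSpan {i : ℤ | k' ≤ i} j this _ (hgdeg j))
      · refine sup_le ?_ ?_
        · rw [hstdk]
          exact degLe _ fun i hi => negMem i (by have h2 : i < k := hi; omega)
        · rw [hstdk']
          exact degLe _ fun i hi => posMem i hi
    · -- only positive part
      push_neg at hneg
      refine Or.inl ⟨k', hk'χ, ?_⟩
      have hstdk' : stdPart X k' = spanDegs X {i : ℤ | k' ≤ i} := if_neg (by omega)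
      rw [hstdk']
      refine le_antisymm ?_ (degLe _ fun i hi => posMem i hi)
      intro m hm
      rw [Submodule.mem_toAddSubgroup] at hm
      obtain ⟨s, g, hgdeg, hgN, hsum⟩ := hN m hm
      rw [hsum]
      refine AddSubgroup.sum_mem _ fun j _ => ?_
      by_cases hgj : g j = 0
      · rw [hgj]; exact zero_mem _
      · have hjS := pieceS j (g j) (hgdeg j) (hgN j) hgj
        have hj0 : j ≠ 0 := fun h => hS0 (h ▸ hjS)
        have hj1 : 1 ≤ j := by
          rcases lt_or_ge j 0 with hjlt | hjge
          · exact absurd (hneg j hjS) (by omega)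
          · omega
        exact memSpan {i : ℤ | k' ≤ i} j (hk'min j ⟨hjS, hj1⟩) _ (hgdeg j)
  · -- only negative part
    push_neg at hpos
    have hneg : ∃ i, i ∈ S ∧ i ≤ -1 := by
      obtain ⟨j, hjS, hj0⟩ := hSne
      refine ⟨j, hjS, ?_⟩
      have := hpos j hjS
      omega
    obtain ⟨m₀, ⟨hm₀S, hm₀1⟩, hm₀max⟩ :=
      Int.exists_greatest_of_bdd (P := fun i => i ∈ S ∧ i ≤ -1) ⟨-1, fun z hz => hz.2⟩ hneg
    set k := m₀ + 1 with hk
    have hk0 : k ≤ 0 := by omega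
    have hkχ : k ∈ chiSet σ v lam := by
      by_contra hχ
      have hnext := upχ m₀ hm₀1 hm₀S hχ
      rcases eq_or_lt_of_le (show k ≤ 0 from hk0) with h1 | h1
      · exact hS0 (h1 ▸ hnext)
      · have := hm₀max k ⟨hnext, by omega⟩
        omega
    have negMem : ∀ i : ℤ, i ≤ m₀ → i ∈ S :=
      fun i hi => Int.le_induction_down hm₀S (fun n hn hns => down n (by omega) hns) i hi
    refine Or.inl ⟨k, hkχ, ?_⟩
    have hstdk : stdPart X k = spanDegs X {i : ℤ | i < k} := if_pos hk0
    rw [hstdk]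
    refine le_antisymm ?_ (degLe _ fun i hi => negMem i (by have h2 : i < k := hi; omega))
    intro m hm
    rw [Submodule.mem_toAddSubgroup] at hm
    obtain ⟨s, g, hgdeg, hgN, hsum⟩ := hN m hm
    rw [hsum]
    refine AddSubgroup.sum_mem _ fun j _ => ?_
    by_cases hgj : g j = 0
    · rw [hgj]; exact zero_mem _
    · have hjS := pieceS j (g j) (hgdeg j) (hgN j) hgj
      have hj0 : j ≠ 0 := fun h => hS0 (h ▸ hjS)
      have hj1 : j ≤ -1 := by
        have := hpos j hjS
        omega
      have : j < k := by have := hm₀max j ⟨hjS, hj1⟩; omega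
      exact memSpan {i : ℤ | i < k} j this _ (hgdeg j)
end
end

section
/- A^λ is an Artinian graded A-module if and only if χ_λ is finite, and A^λ is a simple graded A-module if and only if χ_λ = ∅ (equivalently, λ does not lie in Z^σ). -/
noncomputable section

variable {R : Type} [CommRing R] [Algebra ℂ R] {σ : R ≃ₐ[ℂ] R} {v : R}

variable {G : GWA R σ v}

namespace GWAThm

open Finset

section
variable {R : Type} [CommRing R] [Algebra ℂ R] {σ : R ≃ₐ[ℂ] R} {v : R}

/-- Uniqueness of homogeneous decompositions. -/
theorem indep_unique {M : Type} [AddCommGroup M] (deg : ℤ → AddSubgroup M)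
    (indep : ∀ (s : Finset ℤ) (g : ℤ → M), (∀ i, g i ∈ deg i) → (∑ i ∈ s, g i) = 0 →
      ∀ i ∈ s, g i = 0)
    {s t : Finset ℤ} {g h : ℤ → M} (hg : ∀ i, g i ∈ deg i) (hh : ∀ i, h i ∈ deg i)
    (hgs : ∀ i ∉ s, g i = 0) (hht : ∀ i ∉ t, h i = 0)
    (he : ∑ i ∈ s, g i = ∑ i ∈ t, h i) : ∀ i, g i = h i := by
  classical
  have hsum : ∑ j ∈ s ∪ t, (g j - h j) = 0 := by
    rw [Finset.sum_sub_distrib,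
      ← Finset.sum_subset (Finset.subset_union_left (s₂ := t)) (fun j _ hj => hgs j hj),
      ← Finset.sum_subset (Finset.subset_union_right (s₁ := s)) (fun j _ hj => hht j hj), he,
      sub_self]
  intro i
  by_cases hi : i ∈ s ∪ t
  · have := indep (s ∪ t) (fun j => g j - h j)
      (fun j => (deg j).sub_mem (hg j) (hh j)) hsum i hi
    exact sub_eq_zero.mp this
  · rw [Finset.mem_union, not_or] at hi
    rw [hgs i hi.1, hht i hi.2]

variable (G : GWA R σ v)

/-- The canonical homogeneous basis element of degree `n`. -/
noncomputable def e (n : ℤ) : G.A := if 0 ≤ n then G.tp ^ n.toNat else G.tm ^ (-n).toNat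

theorem tp_pow_mem (k : ℕ) : G.tp ^ k ∈ G.deg k := by
  induction k with
  | zero =>
      have : (G.tp : G.A) ^ 0 = algebraMap ℂ G.A 1 := by rw [map_one, pow_zero]
      rw [this]; exact_mod_cast G.algmap_mem 1
  | succ k ih =>
      rw [pow_succ, show ((k+1:ℕ):ℤ) = (k:ℤ)+1 by push_cast; ring]
      exact G.mul_mem ih G.tp_mem

theorem tm_pow_mem (k : ℕ) : G.tm ^ k ∈ G.deg (-(k : ℤ)) := by
  induction k with
  | zero =>
      have : (G.tm : G.A) ^ 0 = algebraMap ℂ G.A 1 := by rw [map_one, pow_zero]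
      rw [this, show (-((0:ℕ):ℤ)) = 0 by simp]
      exact G.algmap_mem 1
  | succ k ih =>
      rw [pow_succ, show (-((k+1:ℕ):ℤ)) = -(k:ℤ) + -1 by push_cast; ring]
      exact G.mul_mem ih G.tm_mem

theorem e_mem (n : ℤ) : e G n ∈ G.deg n := by
  unfold e
  split
  · next h => have := tp_pow_mem G n.toNat; rwa [Int.toNat_of_nonneg h] at this
  · next h =>
      have := tm_pow_mem G (-n).toNat
      rwa [Int.toNat_of_nonneg (by omega), neg_neg] at this

theorem e_zero : e G 0 = 1 := by simp [e]

theorem emb_mul_tp_pow (k : ℕ) (r : R) :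
    G.emb r * G.tp ^ k = G.tp ^ k * G.emb ((σ ^ (k : ℤ)) r) := by
  induction k generalizing r with
  | zero => simp
  | succ k ih =>
      have h1 : G.tp ^ (k + 1) = G.tp * G.tp ^ k := pow_succ' _ _
      have h2 : (σ ^ ((k+1:ℕ) : ℤ)) r = (σ ^ (k:ℤ)) (σ r) := by
        rw [show ((k+1:ℕ):ℤ) = (k:ℤ)+1 by push_cast; ring, zpow_add, zpow_one,
          AlgEquiv.mul_apply]
      rw [h1, ← mul_assoc, G.rel1, mul_assoc, ih, ← mul_assoc, ← h1, h2]

theorem emb_mul_tm_pow (k : ℕ) (r : R) :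
    G.emb r * G.tm ^ k = G.tm ^ k * G.emb ((σ ^ (-(k : ℤ))) r) := by
  induction k generalizing r with
  | zero => simp
  | succ k ih =>
      have h0 : G.emb r * G.tm = G.tm * G.emb (σ.symm r) := by
        have := G.rel2 (σ.symm r)
        rwa [AlgEquiv.apply_symm_apply] at this
      have h1 : G.tm ^ (k + 1) = G.tm * G.tm ^ k := pow_succ' _ _
      have h2 : (σ ^ (-((k+1:ℕ) : ℤ))) r = (σ ^ (-(k:ℤ))) (σ.symm r) := by
        have hσ : σ.symm r = (σ ^ (-1 : ℤ)) r := by rw [zpow_neg_one]; rfl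
        rw [hσ, ← AlgEquiv.mul_apply, ← zpow_add,
          show (-(k:ℤ)) + -1 = -((k+1:ℕ):ℤ) by push_cast; ring]
      rw [h1, ← mul_assoc, h0, mul_assoc, ih, ← mul_assoc, ← h1, h2]

theorem emb_mul_e (n : ℤ) (r : R) : G.emb r * e G n = e G n * G.emb ((σ ^ n) r) := by
  unfold e
  split
  · next h => rw [emb_mul_tp_pow]; congr 3; rw [Int.toNat_of_nonneg h]
  · next h =>
      rw [emb_mul_tm_pow]; congr 3
      rw [Int.toNat_of_nonneg (by omega)]; ring

theorem tm_pow_mul_tp_pow (a : ℕ) : ∀ n : ℕ, a ≤ n → G.tm ^ a * G.tp ^ n =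
    G.tp ^ (n - a) * G.emb (∏ j ∈ Finset.Icc ((n:ℤ) - a + 1) (n:ℤ), (σ ^ j) v) := by
  induction a with
  | zero =>
      intro n _
      rw [pow_zero, one_mul, Nat.sub_zero, Finset.Icc_eq_empty (by push_cast; omega),
        Finset.prod_empty, map_one, mul_one]
  | succ a ih =>
      intro n hn
      obtain ⟨m, rfl⟩ : ∃ m, n = m + 1 := ⟨n - 1, by omega⟩
      have ham : a ≤ m := by omega
      have hσ : (σ ^ ((m:ℤ)+1)) v = (σ ^ (m:ℤ)) (σ v) := by
        rw [zpow_add, zpow_one, AlgEquiv.mul_apply]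
      have key : G.tm * G.tp ^ (m+1) = G.tp ^ m * G.emb ((σ ^ ((m:ℤ)+1)) v) := by
        rw [pow_succ' G.tp m, ← mul_assoc, G.rel3, hσ, emb_mul_tp_pow]
      have hset : Finset.Icc (((m+1:ℕ):ℤ) - ((a+1:ℕ):ℤ) + 1) ((m+1:ℕ):ℤ) =
          insert ((m:ℤ)+1) (Finset.Icc ((m:ℤ) - a + 1) (m:ℤ)) := by
        ext j
        simp only [Finset.mem_Icc, Finset.mem_insert]
        push_cast
        omega
      calc G.tm ^ (a+1) * G.tp ^ (m+1)
          = G.tm ^ a * (G.tm * G.tp ^ (m+1)) := by rw [pow_succ, mul_assoc]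
        _ = (G.tm ^ a * G.tp ^ m) * G.emb ((σ ^ ((m:ℤ)+1)) v) := by
            rw [key, mul_assoc]
        _ = G.tp ^ (m - a) * G.emb ((∏ j ∈ Finset.Icc ((m:ℤ) - a + 1) (m:ℤ), (σ ^ j) v)
              * (σ ^ ((m:ℤ)+1)) v) := by
            rw [ih m ham, mul_assoc, ← map_mul]
        _ = G.tp ^ (m + 1 - (a + 1)) *
              G.emb (∏ j ∈ Finset.Icc (((m+1:ℕ):ℤ) - ((a+1:ℕ):ℤ) + 1) ((m+1:ℕ):ℤ),
                (σ ^ j) v) := by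
            rw [hset, Finset.prod_insert (by simp only [Finset.mem_Icc]; omega),
              Nat.succ_sub_succ, mul_comm ((σ ^ ((m:ℤ)+1)) v)]

theorem tm_pow_mul_tp_pow' (a n : ℕ) (h : n ≤ a) : G.tm ^ a * G.tp ^ n =
    G.tm ^ (a - n) * G.emb (∏ j ∈ Finset.Icc (1:ℤ) (n:ℤ), (σ ^ j) v) := by
  have h1 : G.tm ^ a = G.tm ^ (a - n) * G.tm ^ n := by rw [← pow_add]; congr 1; omega
  have h2 := tm_pow_mul_tp_pow G n n le_rfl
  rw [Nat.sub_self, pow_zero, one_mul, show (n:ℤ) - n + 1 = 1 by ring] at h2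
  rw [h1, mul_assoc, h2]

theorem tp_pow_mul_tm_pow (a : ℕ) : ∀ b : ℕ, a ≤ b → G.tp ^ a * G.tm ^ b =
    G.tm ^ (b - a) * G.emb (∏ j ∈ Finset.Icc (-(b:ℤ)+1) (-(b:ℤ)+a), (σ ^ j) v) := by
  induction a with
  | zero =>
      intro b _
      rw [pow_zero, one_mul, Nat.sub_zero, Finset.Icc_eq_empty (by push_cast; omega),
        Finset.prod_empty, map_one, mul_one]
  | succ a ih =>
      intro b hb
      obtain ⟨m, rfl⟩ : ∃ m, b = m + 1 := ⟨b - 1, by omega⟩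
      have ham : a ≤ m := by omega
      have key : G.tp * G.tm ^ (m+1) = G.tm ^ m * G.emb ((σ ^ (-(m:ℤ))) v) := by
        rw [pow_succ' G.tm m, ← mul_assoc, G.rel4, emb_mul_tm_pow]
      have hset : Finset.Icc (-((m+1:ℕ):ℤ)+1) (-((m+1:ℕ):ℤ)+((a+1:ℕ):ℤ)) =
          insert (-(m:ℤ)) (Finset.Icc (-(m:ℤ)+1) (-(m:ℤ)+a)) := by
        ext j
        simp only [Finset.mem_Icc, Finset.mem_insert]
        push_cast
        omega
      calc G.tp ^ (a+1) * G.tm ^ (m+1)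
          = G.tp ^ a * (G.tp * G.tm ^ (m+1)) := by rw [pow_succ, mul_assoc]
        _ = (G.tp ^ a * G.tm ^ m) * G.emb ((σ ^ (-(m:ℤ))) v) := by
            rw [key, mul_assoc]
        _ = G.tm ^ (m - a) * G.emb ((∏ j ∈ Finset.Icc (-(m:ℤ)+1) (-(m:ℤ)+a), (σ ^ j) v)
              * (σ ^ (-(m:ℤ))) v) := by
            rw [ih m ham, mul_assoc, ← map_mul]
        _ = G.tm ^ (m + 1 - (a + 1)) *
              G.emb (∏ j ∈ Finset.Icc (-((m+1:ℕ):ℤ)+1) (-((m+1:ℕ):ℤ)+((a+1:ℕ):ℤ)),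
                (σ ^ j) v) := by
            rw [hset, Finset.prod_insert (by simp only [Finset.mem_Icc]; omega),
              Nat.succ_sub_succ, mul_comm ((σ ^ (-(m:ℤ))) v)]

theorem tp_pow_mul_tm_pow' (a b : ℕ) (h : b ≤ a) : G.tp ^ a * G.tm ^ b =
    G.tp ^ (a - b) * G.emb (∏ j ∈ Finset.Icc (-(b:ℤ)+1) 0, (σ ^ j) v) := by
  have h1 : G.tp ^ a = G.tp ^ (a - b) * G.tp ^ b := by rw [← pow_add]; congr 1; omega
  have h2 := tp_pow_mul_tm_pow G b b le_rfl
  rw [Nat.sub_self, pow_zero, one_mul, show -(b:ℤ) + b = 0 by ring] at h2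
  rw [h1, mul_assoc, h2]

end

/-- The scalar picked up when moving from degree `n` to degree `m`. -/
noncomputable def prodv (σ : R ≃ₐ[ℂ] R) (v : R) (m n : ℤ) : R :=
  if n < m then ∏ j ∈ Finset.Icc (n+1) (min m 0), (σ ^ j) v
  else ∏ j ∈ Finset.Icc (max m 0 + 1) n, (σ ^ j) v

section
variable (G : GWA R σ v)

theorem E_mul (m n : ℤ) : e G (m - n) * e G n = e G m * G.emb (prodv σ v m n) := by
  rcases le_or_gt 0 n with hn | hn
  · rcases le_or_gt n m with hnm | hmn
    · have h1 : e G (m - n) = G.tp ^ (m-n).toNat := by rw [e, if_pos (by omega)]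
      have h2 : e G n = G.tp ^ n.toNat := by rw [e, if_pos hn]
      have h3 : e G m = G.tp ^ m.toNat := by rw [e, if_pos (by omega)]
      have h4 : prodv σ v m n = 1 := by
        rw [prodv]
        split
        · rw [Finset.Icc_eq_empty (by omega), Finset.prod_empty]
        · rw [Finset.Icc_eq_empty (by omega), Finset.prod_empty]
      rw [h1, h2, h3, h4, map_one, mul_one, ← pow_add]
      congr 1
      omega
    · have h1 : e G (m - n) = G.tm ^ (n-m).toNat := by
        rw [e, if_neg (by omega)]
        congr 1
        omega
      have h2 : e G n = G.tp ^ n.toNat := by rw [e, if_pos hn]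
      rcases le_or_gt 0 m with hm | hm
      · have h3 : e G m = G.tp ^ m.toNat := by rw [e, if_pos hm]
        have key := tm_pow_mul_tp_pow G (n-m).toNat n.toNat (by omega)
        rw [show n.toNat - (n-m).toNat = m.toNat by omega,
          show ((n.toNat:ℤ) - ((n-m).toNat:ℤ) + 1) = m + 1 by omega,
          show ((n.toNat:ℤ)) = n by omega] at key
        rw [h1, h2, h3, key, prodv, if_neg (by omega),
          show max m 0 + 1 = m + 1 by omega]
      · have h3 : e G m = G.tm ^ (-m).toNat := by rw [e, if_neg (by omega)]
        have key := tm_pow_mul_tp_pow' G (n-m).toNat n.toNat (by omega)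
        rw [show (n-m).toNat - n.toNat = (-m).toNat by omega,
          show ((n.toNat:ℤ)) = n by omega] at key
        rw [h1, h2, h3, key, prodv, if_neg (by omega),
          show max m 0 + 1 = (1:ℤ) by omega]
  · rcases le_or_gt m n with hmn | hnm
    · have h1 : e G (m - n) = G.tm ^ (n-m).toNat := by
        rcases eq_or_lt_of_le hmn with h | h
        · rw [h, sub_self]
          simp [e]
        · rw [e, if_neg (by omega)]
          congr 1
          omega
      have h2 : e G n = G.tm ^ (-n).toNat := by rw [e, if_neg (by omega)]
      have h3 : e G m = G.tm ^ (-m).toNat := by rw [e, if_neg (by omega)]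
      have h4 : prodv σ v m n = 1 := by
        rw [prodv, if_neg (by omega), Finset.Icc_eq_empty (by omega), Finset.prod_empty]
      rw [h1, h2, h3, h4, map_one, mul_one, ← pow_add]
      congr 1
      omega
    · have h1 : e G (m - n) = G.tp ^ (m-n).toNat := by rw [e, if_pos (by omega)]
      have h2 : e G n = G.tm ^ (-n).toNat := by rw [e, if_neg (by omega)]
      rcases le_or_gt m 0 with hm | hm
      · have h3 : e G m = G.tm ^ (-m).toNat := by
          rcases eq_or_lt_of_le hm with h | h
          · rw [h]
            simp [e]
          · rw [e, if_neg (by omega)]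
        have key := tp_pow_mul_tm_pow G (m-n).toNat (-n).toNat (by omega)
        rw [show (-n).toNat - (m-n).toNat = (-m).toNat by omega,
          show (-((-n).toNat:ℤ) + 1) = n + 1 by omega,
          show (-((-n).toNat:ℤ) + ((m-n).toNat:ℤ)) = m by omega] at key
        rw [h1, h2, h3, key, prodv, if_pos (by omega),
          show min m 0 = m by omega]
      · have h3 : e G m = G.tp ^ m.toNat := by rw [e, if_pos (by omega)]
        have key := tp_pow_mul_tm_pow' G (m-n).toNat (-n).toNat (by omega)
        rw [show (m-n).toNat - (-n).toNat = m.toNat by omega,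
          show (-((-n).toNat:ℤ) + 1) = n + 1 by omega] at key
        rw [h1, h2, h3, key, prodv, if_pos (by omega),
          show min m 0 = (0:ℤ) by omega]

end

section
variable (G : GWA R σ v)

theorem e_mul_emb (d : ℤ) (x : R) : e G d * G.emb x = G.emb ((σ ^ (-d)) x) * e G d := by
  rw [emb_mul_e, ← AlgEquiv.mul_apply, ← zpow_add, show d + -d = 0 by ring, zpow_zero,
    AlgEquiv.one_apply]

theorem hdata (a : G.A) : ∃ p : Finset ℤ × (ℤ → G.A),
    (∀ i, p.2 i ∈ G.deg i) ∧ (∀ i ∉ p.1, p.2 i = 0) ∧ a = ∑ i ∈ p.1, p.2 i := by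
  classical
  obtain ⟨s, g, hg, he⟩ := G.decomp a
  refine ⟨⟨s, fun i => if i ∈ s then g i else 0⟩, fun i => ?_, fun i hi => by simp [hi], ?_⟩
  · dsimp only
    split
    · exact hg _
    · exact (G.deg i).zero_mem
  · rw [he]
    exact Finset.sum_congr rfl fun i hi => by simp [hi]

noncomputable def hs (a : G.A) : Finset ℤ := (hdata G a).choose.1
noncomputable def hc (a : G.A) (i : ℤ) : G.A := (hdata G a).choose.2 i

theorem hc_mem (a : G.A) (i : ℤ) : hc G a i ∈ G.deg i := (hdata G a).choose_spec.1 i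
theorem hc_zero_off (a : G.A) : ∀ i ∉ hs G a, hc G a i = 0 := (hdata G a).choose_spec.2.1
theorem hc_sum (a : G.A) : a = ∑ i ∈ hs G a, hc G a i := (hdata G a).choose_spec.2.2

theorem hc_eq {s : Finset ℤ} {g : ℤ → G.A} (hg : ∀ i, g i ∈ G.deg i)
    (hgs : ∀ i ∉ s, g i = 0) {a : G.A} (he : a = ∑ i ∈ s, g i) (i : ℤ) : hc G a i = g i :=
  indep_unique G.deg G.indep (hc_mem G a) hg (hc_zero_off G a) hgs
    (by rw [← hc_sum, ← he]) i

theorem hc_homog {a : G.A} {d : ℤ} (ha : a ∈ G.deg d) (i : ℤ) :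
    hc G a i = if i = d then a else 0 := by
  classical
  refine hc_eq G (s := {d}) (g := fun i => if i = d then a else 0) (fun i => ?_)
    (fun i hi => if_neg (by simpa using hi)) (by simp) i
  split
  · next h => rw [h] at *; exact ha
  · exact (G.deg i).zero_mem

theorem hc_zero (i : ℤ) : hc G 0 i = 0 := by
  rw [hc_homog G (G.deg 0).zero_mem i]
  split <;> rfl

theorem hc_add (a b : G.A) (i : ℤ) : hc G (a + b) i = hc G a i + hc G b i := by
  classical
  refine hc_eq G (s := hs G a ∪ hs G b) (g := fun i => hc G a i + hc G b i)
    (fun i => (G.deg i).add_mem (hc_mem G a i) (hc_mem G b i))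
    (fun i hi => ?_) ?_ i
  · rw [Finset.mem_union, not_or] at hi
    rw [hc_zero_off G a i hi.1, hc_zero_off G b i hi.2, add_zero]
  · rw [Finset.sum_add_distrib,
      ← Finset.sum_subset (Finset.subset_union_left (s₂ := hs G b))
        (fun j _ hj => hc_zero_off G a j hj),
      ← Finset.sum_subset (Finset.subset_union_right (s₁ := hs G a))
        (fun j _ hj => hc_zero_off G b j hj),
      ← hc_sum, ← hc_sum]

theorem e_unique {n : ℤ} {a : G.A} (ha : a ∈ G.deg n) : ∃! r : R, a = G.emb r * e G n := by
  rcases le_or_gt 0 n with h | h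
  · have h2 := G.free_pos n.toNat a (by rwa [Int.toNat_of_nonneg h])
    rwa [show (G.tp ^ n.toNat) = e G n by rw [e, if_pos h]] at h2
  · have h2 := G.free_neg (-n).toNat a (by rw [show (-((-n).toNat:ℤ)) = n by omega]; exact ha)
    rwa [show (G.tm ^ (-n).toNat) = e G n by rw [e, if_neg (by omega)]] at h2

noncomputable def rc (n : ℤ) (a : G.A) : R := (e_unique G (hc_mem G a n)).choose

theorem rc_spec (n : ℤ) (a : G.A) : hc G a n = G.emb (rc G n a) * e G n :=
  (e_unique G (hc_mem G a n)).choose_spec.1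

theorem rc_eq {n : ℤ} {a : G.A} {r : R} (h : hc G a n = G.emb r * e G n) : rc G n a = r :=
  ((e_unique G (hc_mem G a n)).choose_spec.2 r h).symm

theorem rc_homog {a : G.A} {d : ℤ} (ha : a ∈ G.deg d) : a = G.emb (rc G d a) * e G d := by
  have h := rc_spec G d a
  rwa [hc_homog G ha d, if_pos rfl] at h

theorem rc_homog_ne {a : G.A} {d : ℤ} (ha : a ∈ G.deg d) {n : ℤ} (h : n ≠ d) :
    rc G n a = 0 :=
  rc_eq G (by rw [hc_homog G ha n, if_neg h, map_zero, zero_mul])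

theorem rc_zero (n : ℤ) : rc G n 0 = 0 :=
  rc_eq G (by rw [hc_zero, map_zero, zero_mul])

theorem rc_add (n : ℤ) (a b : G.A) : rc G n (a + b) = rc G n a + rc G n b :=
  rc_eq G (by rw [hc_add, rc_spec G n a, rc_spec G n b, map_add, add_mul])

theorem rc_finsum {ι : Type} (s : Finset ι) (f : ι → G.A) (n : ℤ) :
    rc G n (∑ i ∈ s, f i) = ∑ i ∈ s, rc G n (f i) := by
  classical
  induction s using Finset.induction with
  | empty => simpa using rc_zero G n
  | insert _ _ h ih => rw [Finset.sum_insert h, Finset.sum_insert h, rc_add, ih]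

theorem span_emb_rc (lam : Ideal R) {a : G.A}
    (ha : a ∈ Submodule.span G.A (G.emb '' (lam : Set R))) :
    ∀ n : ℤ, (σ ^ n) (rc G n a) ∈ lam := by
  induction ha using Submodule.span_induction with
  | mem z hz =>
      obtain ⟨l, hl, rfl⟩ := hz
      intro n
      by_cases h : n = (0:ℤ)
      · subst h
        have hr : rc G 0 (G.emb l) = l := by
          apply rc_eq
          rw [hc_homog G (G.emb_mem l) 0, if_pos rfl, e_zero, mul_one]
        rw [hr]
        simpa using hl
      · rw [rc_homog_ne G (G.emb_mem l) h, map_zero]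
        exact lam.zero_mem
  | zero =>
      intro n
      rw [rc_zero, map_zero]
      exact lam.zero_mem
  | add y z hy hz ihy ihz =>
      intro n
      rw [rc_add, map_add]
      exact lam.add_mem (ihy n) (ihz n)
  | smul c b hb ih =>
      intro n
      have hb' : c • b = ∑ d ∈ hs G c, hc G c d * b := by
        rw [smul_eq_mul, ← Finset.sum_mul, ← hc_sum]
      rw [hb', rc_finsum, map_sum]
      refine Submodule.sum_mem lam fun d _ => ?_
      have hb2 : hc G c d * b = ∑ i ∈ hs G b, hc G c d * hc G b i := by
        rw [← Finset.mul_sum, ← hc_sum]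
      rw [hb2, rc_finsum, map_sum]
      refine Submodule.sum_mem lam fun i _ => ?_
      have hz : hc G c d * hc G b i ∈ G.deg (d + i) :=
        G.mul_mem (hc_mem G c d) (hc_mem G b i)
      by_cases hdi : n = d + i
      · subst hdi
        have hE := E_mul G (d + i) i
        rw [add_sub_cancel_right] at hE
        have hzc : hc G c d * hc G b i =
            G.emb (rc G d c * (σ ^ (-d)) (rc G i b) *
              (σ ^ (-(d+i))) (prodv σ v (d+i) i)) * e G (d+i) := by
          rw [rc_spec G d c, rc_spec G i b]
          calc (G.emb (rc G d c) * e G d) * (G.emb (rc G i b) * e G i)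
              = G.emb (rc G d c) * (e G d * G.emb (rc G i b)) * e G i := by
                rw [mul_assoc, mul_assoc, mul_assoc]
            _ = G.emb (rc G d c) * (G.emb ((σ ^ (-d)) (rc G i b)) * e G d) * e G i := by
                rw [e_mul_emb]
            _ = (G.emb (rc G d c) * G.emb ((σ ^ (-d)) (rc G i b))) * (e G d * e G i) := by
                rw [mul_assoc, mul_assoc, mul_assoc]
            _ = (G.emb (rc G d c) * G.emb ((σ ^ (-d)) (rc G i b))) *
                  (e G (d+i) * G.emb (prodv σ v (d+i) i)) := by rw [hE]
            _ = (G.emb (rc G d c) * G.emb ((σ ^ (-d)) (rc G i b))) *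
                  (G.emb ((σ ^ (-(d+i))) (prodv σ v (d+i) i)) * e G (d+i)) := by
                rw [e_mul_emb]
            _ = G.emb (rc G d c * (σ ^ (-d)) (rc G i b) *
                  (σ ^ (-(d+i))) (prodv σ v (d+i) i)) * e G (d+i) := by
                simp only [map_mul, mul_assoc]
        have hrc : rc G (d+i) (hc G c d * hc G b i) =
            rc G d c * (σ ^ (-d)) (rc G i b) * (σ ^ (-(d+i))) (prodv σ v (d+i) i) :=
          rc_eq G (by rw [hc_homog G hz, if_pos rfl]; exact hzc)
        rw [hrc, map_mul, map_mul]
        have h5 : (σ ^ (d+i)) ((σ ^ (-d)) (rc G i b)) = (σ ^ i) (rc G i b) := by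
          rw [← AlgEquiv.mul_apply, ← zpow_add, show d + i + -d = i by ring]
        rw [h5]
        exact lam.mul_mem_right _ (lam.mul_mem_left _ (ih i))
      · rw [rc_homog_ne G hz hdi, map_zero]
        exact lam.zero_mem

theorem emb_e_mem_span_iff (lam : Ideal R) (r : R) (n : ℤ) :
    G.emb r * e G n ∈ Submodule.span G.A (G.emb '' (lam : Set R)) ↔ (σ ^ n) r ∈ lam := by
  constructor
  · intro h
    have hmem : G.emb r * e G n ∈ G.deg n := by
      have h2 := G.mul_mem (G.emb_mem r) (e_mem G n)
      rwa [zero_add] at h2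
    have hr : rc G n (G.emb r * e G n) = r := rc_eq G (by rw [hc_homog G hmem, if_pos rfl])
    have h3 := span_emb_rc G lam h n
    rwa [hr] at h3
  · intro h
    rw [emb_mul_e]
    have h2 : G.emb ((σ ^ n) r) ∈ Submodule.span G.A (G.emb '' (lam : Set R)) :=
      Submodule.subset_span ⟨(σ ^ n) r, h, rfl⟩
    simpa [smul_eq_mul] using Submodule.smul_mem _ (e G n) h2

end

section
variable {G : GWA R σ v} {X : GradedMod G}

theorem extractX {ι : Type} (s : Finset ι) (g : ι → X.M) (dg : ι → ℤ)
    (hg : ∀ i ∈ s, g i ∈ X.deg (dg i)) {n : ℤ} {m : X.M} (hm : m ∈ X.deg n)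
    (he : m = ∑ i ∈ s, g i) : m = ∑ i ∈ s.filter (fun i => dg i = n), g i := by
  classical
  set Gf : ℤ → X.M := fun j => ∑ i ∈ s.filter (fun i => dg i = j), g i with hGf
  have hsum : ∑ j ∈ s.image dg, Gf j = m := by
    rw [he]
    exact Finset.sum_fiberwise_of_maps_to (fun i hi => Finset.mem_image_of_mem dg hi) g
  have hGmem : ∀ j, Gf j ∈ X.deg j := fun j =>
    AddSubgroup.sum_mem _ fun i hi => by
      have h2 := hg i (Finset.mem_of_mem_filter i hi)
      rwa [(Finset.mem_filter.mp hi).2] at h2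
  have hGoff : ∀ j ∉ s.image dg, Gf j = 0 := fun j hj => by
    rw [hGf]
    dsimp only
    rw [Finset.filter_eq_empty_iff.mpr
        (fun {i} hi hij => hj (by rw [← hij]; exact Finset.mem_image_of_mem dg hi)),
      Finset.sum_empty]
  have key := indep_unique X.deg X.indep (s := s.image dg) (t := {n})
    (g := Gf) (h := fun j => if j = n then m else 0) hGmem
    (fun j => by skip
                 split
                 · next h => rw [h]; exact hm
                 · exact (X.deg j).zero_mem)
    hGoff (fun j hj => if_neg (by simpa using hj)) (by rw [hsum]; simp)
  have h3 : Gf n = m := by simpa using key n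
  rw [← h3]

end

/-- Bundled data of a standard module `A^λ`. -/
structure StdM (G : GWA R σ v) (lam : Ideal R) (X : GradedMod G) : Type where
  x : X.M
  hx0 : x ∈ X.deg 0
  hspan : Submodule.span G.A {x} = ⊤
  hann : ∀ a : G.A, a • x = 0 ↔ a ∈ Submodule.span G.A (G.emb '' (lam : Set R))

section
variable {G : GWA R σ v} {X : GradedMod G} {lam : Ideal R}

/-- The canonical generator of degree `n` in `A^λ`. -/
noncomputable def StdM.xe (S : StdM G lam X) (n : ℤ) : X.M := e G n • S.x

variable (S : StdM G lam X)

theorem xe_mem (n : ℤ) : S.xe n ∈ X.deg n := by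
  have h := X.smul_mem (e_mem G n) S.hx0
  rwa [add_zero] at h

theorem smul_xe (r : R) (n : ℤ) : G.emb r • S.xe n = (G.emb r * e G n) • S.x :=
  (mul_smul _ _ _).symm

theorem smul_xe_eq_zero_iff (r : R) (n : ℤ) :
    G.emb r • S.xe n = 0 ↔ (σ ^ n) r ∈ lam := by
  rw [smul_xe, S.hann, emb_e_mem_span_iff]

theorem xe_ne_zero (hlam : lam.IsMaximal) (n : ℤ) : S.xe n ≠ 0 := by
  intro h
  have h1 : G.emb 1 • S.xe n = 0 := by rw [map_one, one_smul, h]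
  rw [smul_xe_eq_zero_iff, map_one] at h1
  exact hlam.ne_top ((Ideal.eq_top_iff_one lam).mpr h1)

theorem mem_deg_imp {n : ℤ} {m : X.M} (hm : m ∈ X.deg n) :
    ∃ r : R, m = G.emb r • S.xe n := by
  classical
  have hx : m ∈ Submodule.span G.A {S.x} := S.hspan ▸ Submodule.mem_top
  obtain ⟨a, ha⟩ := Submodule.mem_span_singleton.mp hx
  have he : m = ∑ d ∈ hs G a, hc G a d • S.x := by
    rw [← ha]
    nth_rewrite 1 [hc_sum G a]
    rw [Finset.sum_smul]
  have hterm : ∀ d ∈ hs G a, hc G a d • S.x ∈ X.deg (id d) := fun d _ => by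
    have h2 := X.smul_mem (hc_mem G a d) S.hx0
    rwa [add_zero] at h2
  have hf := extractX (hs G a) (fun d => hc G a d • S.x) id hterm hm he
  by_cases hn : n ∈ hs G a
  · have hfil : (hs G a).filter (fun d => id d = n) = {n} := by
      ext j
      simp only [Finset.mem_filter, Finset.mem_singleton, id]
      constructor
      · rintro ⟨_, h2⟩; exact h2
      · rintro rfl; exact ⟨hn, rfl⟩
    rw [hfil, Finset.sum_singleton] at hf
    exact ⟨rc G n a, by rw [hf, rc_spec G n a, mul_smul]; rfl⟩
  · have hfil : (hs G a).filter (fun d => id d = n) = ∅ :=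
      Finset.filter_eq_empty_iff.mpr fun {j} hj hjn => hn (hjn ▸ hj)
    rw [hfil, Finset.sum_empty] at hf
    exact ⟨0, by rw [hf, map_zero, zero_smul]⟩

theorem comp_step (hlam : lam.IsMaximal) {N : Submodule G.A X.M} {r : R} {n : ℤ}
    (h1 : G.emb r • S.xe n ∈ N) (h2 : (σ ^ n) r ∉ lam) : S.xe n ∈ N := by
  obtain ⟨y, i, hi, hyi⟩ := hlam.exists_inv h2
  have hz : S.xe n - G.emb ((σ ^ (-n)) y * r) • S.xe n = 0 := by
    have h3 : S.xe n - G.emb ((σ ^ (-n)) y * r) • S.xe n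
        = G.emb (1 - (σ ^ (-n)) y * r) • S.xe n := by
      rw [map_sub, sub_smul, map_one, one_smul]
    rw [h3, smul_xe_eq_zero_iff]
    have h4 : (σ ^ n) (1 - (σ ^ (-n)) y * r) = 1 - y * (σ ^ n) r := by
      rw [map_sub, map_one, map_mul, ← AlgEquiv.mul_apply, ← zpow_add,
        show n + -n = 0 by ring, zpow_zero, AlgEquiv.one_apply]
    rw [h4, show (1 : R) - y * (σ ^ n) r = i by rw [← hyi]; ring]
    exact hi
  have h6 := sub_eq_zero.mp hz
  rw [map_mul] at h6
  rw [h6, mul_smul]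
  exact N.smul_mem _ h1

theorem step_up (hlam : lam.IsMaximal) {N : Submodule G.A X.M} {n : ℤ} (h : S.xe n ∈ N)
    (hv : 0 < n + 1 ∨ (σ ^ (n+1)) v ∉ lam) : S.xe (n+1) ∈ N := by
  have hE := E_mul G (n+1) n
  rw [show n + 1 - n = (1:ℤ) by ring] at hE
  have h1 : e G 1 • S.xe n = G.emb ((σ ^ (-(n+1))) (prodv σ v (n+1) n)) • S.xe (n+1) := by
    show e G 1 • (e G n • S.x) = _ • (e G (n+1) • S.x)
    rw [← mul_smul, hE, e_mul_emb, mul_smul]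
  have h2 : G.emb ((σ ^ (-(n+1))) (prodv σ v (n+1) n)) • S.xe (n+1) ∈ N := by
    rw [← h1]
    exact N.smul_mem _ h
  apply comp_step S hlam h2
  rw [← AlgEquiv.mul_apply, ← zpow_add, show n + 1 + -(n+1) = 0 by ring, zpow_zero,
    AlgEquiv.one_apply]
  rw [prodv, if_pos (by omega)]
  rcases le_or_gt (n+1) 0 with hs | hs
  · rw [show min (n+1) 0 = n+1 by omega, Finset.Icc_self, Finset.prod_singleton]
    rcases hv with hv | hv
    · exact absurd hs (by omega)
    · exact hv
  · rw [show min (n+1) 0 = 0 by omega, Finset.Icc_eq_empty (by omega), Finset.prod_empty]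
    exact fun hmem => hlam.ne_top ((Ideal.eq_top_iff_one lam).mpr hmem)

theorem step_down (hlam : lam.IsMaximal) {N : Submodule G.A X.M} {n : ℤ} (h : S.xe n ∈ N)
    (hv : n ≤ 0 ∨ (σ ^ n) v ∉ lam) : S.xe (n-1) ∈ N := by
  have hE := E_mul G (n-1) n
  rw [show n - 1 - n = (-1:ℤ) by ring] at hE
  have h1 : e G (-1) • S.xe n = G.emb ((σ ^ (-(n-1))) (prodv σ v (n-1) n)) • S.xe (n-1) := by
    show e G (-1) • (e G n • S.x) = _ • (e G (n-1) • S.x)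
    rw [← mul_smul, hE, e_mul_emb, mul_smul]
  have h2 : G.emb ((σ ^ (-(n-1))) (prodv σ v (n-1) n)) • S.xe (n-1) ∈ N := by
    rw [← h1]
    exact N.smul_mem _ h
  apply comp_step S hlam h2
  rw [← AlgEquiv.mul_apply, ← zpow_add, show n - 1 + -(n-1) = 0 by ring, zpow_zero,
    AlgEquiv.one_apply]
  rw [prodv, if_neg (by omega)]
  rcases le_or_gt n 0 with hs | hs
  · rw [show max (n-1) 0 + 1 = 1 by omega, Finset.Icc_eq_empty (by omega), Finset.prod_empty]
    exact fun hmem => hlam.ne_top ((Ideal.eq_top_iff_one lam).mpr hmem)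
  · rw [show max (n-1) 0 + 1 = n by omega, Finset.Icc_self, Finset.prod_singleton]
    rcases hv with hv | hv
    · exact absurd hs (by omega)
    · exact hv

theorem graded_le (hlam : lam.IsMaximal) {N N' : Submodule G.A X.M} (hN : IsGradedSub X N)
    (hss : ∀ n : ℤ, S.xe n ∈ N → S.xe n ∈ N') : N ≤ N' := by
  intro m hm
  obtain ⟨s, g, hdeg, hmemN, he⟩ := hN m hm
  rw [he]
  refine Submodule.sum_mem N' fun i _ => ?_
  obtain ⟨r, hr⟩ := mem_deg_imp S (hdeg i)
  by_cases h0 : (σ ^ i) r ∈ lam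
  · rw [hr, (smul_xe_eq_zero_iff S r i).mpr h0]
    exact N'.zero_mem
  · have hxeN : S.xe i ∈ N := comp_step S hlam (hr ▸ hmemN i) h0
    rw [hr]
    exact N'.smul_mem _ (hss i hxeN)

theorem gradedSub_span (T : Set X.M) (hT : ∀ m ∈ T, ∃ i, m ∈ X.deg i) :
    IsGradedSub X (Submodule.span G.A T) := by
  classical
  intro m hm
  have key : ∃ (s : Finset ℤ) (g : ℤ → X.M),
      (∀ i, g i ∈ X.deg i) ∧ (∀ i, g i ∈ Submodule.span G.A T) ∧ (∀ i ∉ s, g i = 0) ∧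
      m = ∑ i ∈ s, g i := by
    induction hm using Submodule.span_induction with
    | mem z hz =>
        obtain ⟨i, hi⟩ := hT z hz
        refine ⟨{i}, fun j => if j = i then z else 0, fun j => ?_, fun j => ?_,
          fun j hj => if_neg (by simpa using hj), by simp⟩
        · dsimp only
          split
          · next h => rw [h]; exact hi
          · exact (X.deg j).zero_mem
        · dsimp only
          split
          · exact Submodule.subset_span hz
          · exact Submodule.zero_mem _
    | zero =>
        exact ⟨∅, fun _ => 0, fun j => (X.deg j).zero_mem, fun j => Submodule.zero_mem _,
          fun _ _ => rfl, by simp⟩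
    | add y z _ _ ihy ihz =>
        obtain ⟨s1, g1, h11, h12, h13, h14⟩ := ihy
        obtain ⟨s2, g2, h21, h22, h23, h24⟩ := ihz
        refine ⟨s1 ∪ s2, fun i => g1 i + g2 i,
          fun i => (X.deg i).add_mem (h11 i) (h21 i),
          fun i => Submodule.add_mem _ (h12 i) (h22 i), fun i hi => ?_, ?_⟩
        · rw [Finset.mem_union, not_or] at hi
          dsimp only
          rw [h13 i hi.1, h23 i hi.2, add_zero]
        · rw [Finset.sum_add_distrib,
            ← Finset.sum_subset (Finset.subset_union_left (s₂ := s2))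
              (fun j _ hj => h13 j hj),
            ← Finset.sum_subset (Finset.subset_union_right (s₁ := s1))
              (fun j _ hj => h23 j hj), ← h14, ← h24]
    | smul c w _ ihw =>
        obtain ⟨s, g, h1, h2, h3, h4⟩ := ihw
        refine ⟨Finset.image (fun p : ℤ × ℤ => p.1 + p.2) (hs G c ×ˢ s),
          fun j => ∑ i ∈ s, hc G c (j - i) • g i, fun j => ?_, fun j => ?_, fun j hj => ?_, ?_⟩
        · refine AddSubgroup.sum_mem _ fun i _ => ?_
          have h5 := X.smul_mem (hc_mem G c (j - i)) (h1 i)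
          rwa [sub_add_cancel] at h5
        · exact Submodule.sum_mem _ fun i _ => Submodule.smul_mem _ _ (h2 i)
        · refine Finset.sum_eq_zero fun i hi => ?_
          by_cases hd : j - i ∈ hs G c
          · exact absurd (Finset.mem_image.mpr ⟨(j - i, i), Finset.mem_product.mpr ⟨hd, hi⟩,
              by ring⟩) hj
          · rw [hc_zero_off G c _ hd, zero_smul]
        · have hw : ∀ i ∈ s, c • g i =
              ∑ j ∈ Finset.image (fun p : ℤ × ℤ => p.1 + p.2) (hs G c ×ˢ s),
                hc G c (j - i) • g i := by
            intro i hi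
            have ht : (hs G c).image (· + i) ⊆
                Finset.image (fun p : ℤ × ℤ => p.1 + p.2) (hs G c ×ˢ s) := by
              intro j hj
              obtain ⟨d, hd, rfl⟩ := Finset.mem_image.mp hj
              exact Finset.mem_image.mpr ⟨(d, i), Finset.mem_product.mpr ⟨hd, hi⟩, rfl⟩
            rw [← Finset.sum_subset ht (fun j _ hj => ?_)]
            · rw [Finset.sum_image (fun a _ b _ h => by omega)]
              calc c • g i = (∑ d ∈ hs G c, hc G c d) • g i := by rw [← hc_sum]
                _ = ∑ d ∈ hs G c, hc G c d • g i := Finset.sum_smul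
                _ = ∑ d ∈ hs G c, hc G c (d + i - i) • g i :=
                    Finset.sum_congr rfl fun d _ => by rw [add_sub_cancel_right]
            · by_cases hd : j - i ∈ hs G c
              · exact absurd (Finset.mem_image.mpr ⟨j - i, hd, by ring⟩) hj
              · rw [hc_zero_off G c _ hd, zero_smul]
          calc c • w = c • ∑ i ∈ s, g i := by rw [← h4]
            _ = ∑ i ∈ s, c • g i := Finset.smul_sum
            _ = ∑ i ∈ s, ∑ j ∈ Finset.image (fun p : ℤ × ℤ => p.1 + p.2) (hs G c ×ˢ s),
                  hc G c (j - i) • g i := Finset.sum_congr rfl hw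
            _ = ∑ j ∈ Finset.image (fun p : ℤ × ℤ => p.1 + p.2) (hs G c ×ˢ s),
                  ∑ i ∈ s, hc G c (j - i) • g i := Finset.sum_comm
  obtain ⟨s, g, h1, h2, h3, h4⟩ := key
  exact ⟨s, g, h1, h2, h4⟩

end

theorem prodv_mem (lam : Ideal R) {k m n : ℤ} (hk : (σ ^ k) v ∈ lam)
    (h : (¬ n < m ∧ max m 0 + 1 ≤ k ∧ k ≤ n) ∨ (n < m ∧ n + 1 ≤ k ∧ k ≤ min m 0)) :
    prodv σ v m n ∈ lam := by
  classical
  rw [prodv]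
  rcases h with ⟨h1, h2, h3⟩ | ⟨h1, h2, h3⟩
  · rw [if_neg h1, ← Finset.mul_prod_erase _ _ (Finset.mem_Icc.mpr ⟨h2, h3⟩)]
    exact lam.mul_mem_right _ hk
  · rw [if_pos h1, ← Finset.mul_prod_erase _ _ (Finset.mem_Icc.mpr ⟨h2, h3⟩)]
    exact lam.mul_mem_right _ hk

section
variable {G : GWA R σ v} {X : GradedMod G} {lam : Ideal R} (S : StdM G lam X)

theorem xe_def (n : ℤ) : S.xe n = e G n • S.x := rfl

theorem xe_zero_eq : S.xe 0 = S.x := by rw [xe_def, e_zero, one_smul]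

theorem xe_notmem_span (hlam : lam.IsMaximal) {m : ℤ} (T : Set ℤ)
    (hcross : ∀ n ∈ T, prodv σ v m n ∈ lam) :
    S.xe m ∉ Submodule.span G.A (S.xe '' T) := by
  classical
  intro hmem
  rw [Finsupp.mem_span_image_iff_linearCombination] at hmem
  obtain ⟨l, hl, heq⟩ := hmem
  have hl' : ↑l.support ⊆ T := (Finsupp.mem_supported _ _).mp hl
  have heq' : S.xe m = ∑ i ∈ l.support, l i • S.xe i := by
    rw [← heq, Finsupp.linearCombination_apply, Finsupp.sum]
  have heq2 : S.xe m = ∑ p ∈ l.support.sigma (fun i => hs G (l i)),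
      hc G (l p.1) p.2 • S.xe p.1 := by
    rw [heq', Finset.sum_sigma]
    refine Finset.sum_congr rfl fun i _ => ?_
    dsimp only
    rw [← Finset.sum_smul, ← hc_sum]
  have hdeg : ∀ p ∈ l.support.sigma (fun i => hs G (l i)),
      hc G (l p.1) p.2 • S.xe p.1 ∈ X.deg (p.2 + p.1) := fun p _ =>
    X.smul_mem (hc_mem G (l p.1) p.2) (xe_mem S p.1)
  have hex := extractX _ _ (fun p : Σ _ : ℤ, ℤ => p.2 + p.1) hdeg (xe_mem S m) heq2
  have hzero : ∀ p ∈ (l.support.sigma (fun i => hs G (l i))).filter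
      (fun p : Σ _ : ℤ, ℤ => p.2 + p.1 = m), hc G (l p.1) p.2 • S.xe p.1 = 0 := by
    intro p hp
    rw [Finset.mem_filter] at hp
    obtain ⟨hps, hpd⟩ := hp
    have hT1 : p.1 ∈ T := hl' (Finset.mem_coe.mpr (Finset.mem_sigma.mp hps).1)
    have hp2 : p.2 = m - p.1 := by omega
    rw [rc_spec G p.2 (l p.1), hp2]
    have hE := E_mul G m p.1
    calc (G.emb (rc G (m - p.1) (l p.1)) * e G (m - p.1)) • S.xe p.1
        = (G.emb (rc G (m - p.1) (l p.1)) * e G (m - p.1) * e G p.1) • S.x := by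
          rw [xe_def, ← mul_smul]
      _ = (G.emb (rc G (m - p.1) (l p.1)) * (e G m * G.emb (prodv σ v m p.1))) • S.x := by
          rw [mul_assoc, hE]
      _ = (G.emb (rc G (m - p.1) (l p.1) * (σ ^ (-m)) (prodv σ v m p.1)) * e G m) • S.x := by
          rw [e_mul_emb, map_mul, mul_assoc]
      _ = G.emb (rc G (m - p.1) (l p.1) * (σ ^ (-m)) (prodv σ v m p.1)) • S.xe m := by
          rw [xe_def, ← mul_smul]
      _ = 0 := by
          rw [smul_xe_eq_zero_iff, map_mul]
          have hcan : (σ ^ m) ((σ ^ (-m)) (prodv σ v m p.1)) = prodv σ v m p.1 := by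
            rw [← AlgEquiv.mul_apply, ← zpow_add, show m + -m = 0 by ring, zpow_zero,
              AlgEquiv.one_apply]
          rw [hcan]
          exact lam.mul_mem_left _ (hcross p.1 hT1)
  rw [Finset.sum_eq_zero hzero] at hex
  exact xe_ne_zero S hlam m hex

end

/-- A subset of `ℤ` closed under all the degree moves available in `A^λ`. -/
def ChiClosed (σ : R ≃ₐ[ℂ] R) (v : R) (lam : Ideal R) (Sset : Set ℤ) : Prop :=
  (∀ n ∈ Sset, (0 < n + 1 ∨ (σ ^ (n+1)) v ∉ lam) → n + 1 ∈ Sset) ∧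
  (∀ n ∈ Sset, (n ≤ 0 ∨ (σ ^ n) v ∉ lam) → n - 1 ∈ Sset)

section
variable {G : GWA R σ v} {X : GradedMod G} {lam : Ideal R} (S : StdM G lam X)

theorem SN_closed (hlam : lam.IsMaximal) (N : Submodule G.A X.M) :
    ChiClosed σ v lam {n | S.xe n ∈ N} :=
  ⟨fun n hn hv => step_up S hlam hn hv, fun n hn hv => step_down S hlam hn hv⟩

end

theorem up_chain {lam : Ideal R} {Sset : Set ℤ} (hS : ChiClosed σ v lam Sset) (a b : ℤ)
    (hab : a ≤ b) (ha : a ∈ Sset)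
    (hblock : ∀ j, a < j → j ≤ b → j ≤ 0 → (σ ^ j) v ∉ lam) : b ∈ Sset := by
  refine Int.le_induction
    (motive := fun b _ => (∀ j, a < j → j ≤ b → j ≤ 0 → (σ ^ j) v ∉ lam) → b ∈ Sset)
    (fun _ => ha) ?_ b hab hblock
  intro n hn ih hbl
  have hnS := ih (fun j h1 h2 h3 => hbl j h1 (by omega) h3)
  refine hS.1 n hnS ?_
  rcases le_or_gt (n+1) 0 with h | h
  · exact Or.inr (hbl (n+1) (by omega) le_rfl h)
  · exact Or.inl h

theorem down_chain {lam : Ideal R} {Sset : Set ℤ} (hS : ChiClosed σ v lam Sset) (a b : ℤ)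
    (hab : a ≤ b) (hb : b ∈ Sset)
    (hblock : ∀ j, a < j → j ≤ b → 1 ≤ j → (σ ^ j) v ∉ lam) : a ∈ Sset := by
  refine Int.le_induction_down
    (motive := fun a _ => (∀ j, a < j → j ≤ b → 1 ≤ j → (σ ^ j) v ∉ lam) → a ∈ Sset)
    (fun _ => hb) ?_ a hab hblock
  intro n hn ih hbl
  have hnS := ih (fun j h1 h2 h3 => hbl j (by omega) h2 h3)
  refine hS.2 n hnS ?_
  rcases le_or_gt n 0 with h | h
  · exact Or.inl h
  · exact Or.inr (hbl n (by omega) (by omega) (by omega))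

theorem DL {lam : Ideal R} (hχ : (chiSet σ v lam).Finite) {S₁ S₂ : Set ℤ}
    (h1 : ChiClosed σ v lam S₁) (h2 : ChiClosed σ v lam S₂) (hsub : S₁ ⊆ S₂)
    (hF : ∀ j ∈ (hχ.toFinset ∪ hχ.toFinset.image (· - 1) ∪ {0} : Finset ℤ),
      (j ∈ S₁ ↔ j ∈ S₂)) :
    S₂ ⊆ S₁ := by
  classical
  intro m hm
  by_cases hmF : m ∈ (hχ.toFinset ∪ hχ.toFinset.image (· - 1) ∪ {0} : Finset ℤ)
  · exact (hF m hmF).mpr hm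
  have hm0 : m ≠ 0 := fun h => hmF (by rw [h]; simp)
  rcases lt_or_gt_of_ne hm0 with hneg | hpos
  · set T := hχ.toFinset.filter (fun j => m + 1 ≤ j ∧ j ≤ 0) with hT
    by_cases hTne : T.Nonempty
    · set k := T.min' hTne - 1 with hk
      have hmm := Finset.mem_filter.mp (T.min'_mem hTne)
      have hkm : m ≤ k := by omega
      have hmin : ∀ j, m < j → j ≤ k → j ≤ 0 → (σ ^ j) v ∉ lam := by
        intro j hj1 hj2 hj3 hmem
        have hjT : j ∈ T := Finset.mem_filter.mpr ⟨hχ.mem_toFinset.mpr hmem, by omega, hj3⟩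
        have := T.min'_le j hjT
        omega
      have hkS2 : k ∈ S₂ := up_chain h2 m k hkm hm hmin
      have hkF : k ∈ (hχ.toFinset ∪ hχ.toFinset.image (· - 1) ∪ {0} : Finset ℤ) := by
        refine Finset.mem_union.mpr (Or.inl (Finset.mem_union.mpr (Or.inr ?_)))
        exact Finset.mem_image.mpr ⟨T.min' hTne, hmm.1, by omega⟩
      have hkS1 : k ∈ S₁ := (hF k hkF).mpr hkS2
      exact down_chain h1 m k hkm hkS1 (fun j hj1 hj2 hj3 => absurd hj3 (by omega))
    · have hmin : ∀ j, m < j → j ≤ (0:ℤ) → j ≤ 0 → (σ ^ j) v ∉ lam := by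
        intro j hj1 hj2 _ hmem
        exact hTne ⟨j, Finset.mem_filter.mpr ⟨hχ.mem_toFinset.mpr hmem, by omega, hj2⟩⟩
      have h0S2 : (0:ℤ) ∈ S₂ := up_chain h2 m 0 (by omega) hm hmin
      have h0S1 : (0:ℤ) ∈ S₁ := (hF 0 (by simp)).mpr h0S2
      exact down_chain h1 m 0 (by omega) h0S1 (fun j hj1 hj2 hj3 => absurd hj2 (by omega))
  · set T := hχ.toFinset.filter (fun j => 1 ≤ j ∧ j ≤ m) with hT
    by_cases hTne : T.Nonempty
    · set k := T.max' hTne with hk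
      have hmm := Finset.mem_filter.mp (T.max'_mem hTne)
      have hkm : k ≤ m := hmm.2.2
      have hmax : ∀ j, k < j → j ≤ m → 1 ≤ j → (σ ^ j) v ∉ lam := by
        intro j hj1 hj2 hj3 hmem
        have hjT : j ∈ T := Finset.mem_filter.mpr ⟨hχ.mem_toFinset.mpr hmem, hj3, hj2⟩
        have := T.le_max' j hjT
        omega
      have hkS2 : k ∈ S₂ := down_chain h2 k m hkm hm hmax
      have hkF : k ∈ (hχ.toFinset ∪ hχ.toFinset.image (· - 1) ∪ {0} : Finset ℤ) :=
        Finset.mem_union.mpr (Or.inl (Finset.mem_union.mpr (Or.inl hmm.1)))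
      have hkS1 : k ∈ S₁ := (hF k hkF).mpr hkS2
      have hk1 : 1 ≤ k := hmm.2.1
      exact up_chain h1 k m hkm hkS1 (fun j hj1 hj2 hj3 => absurd hj3 (by omega))
    · have hmax : ∀ j, (0:ℤ) < j → j ≤ m → 1 ≤ j → (σ ^ j) v ∉ lam := by
        intro j hj1 hj2 hj3 hmem
        exact hTne ⟨j, Finset.mem_filter.mpr ⟨hχ.mem_toFinset.mpr hmem, hj3, hj2⟩⟩
      have h0S2 : (0:ℤ) ∈ S₂ := down_chain h2 0 m (by omega) hm hmax
      have h0S1 : (0:ℤ) ∈ S₁ := (hF 0 (by simp)).mpr h0S2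
      exact up_chain h1 0 m (by omega) h0S1 (fun j hj1 hj2 hj3 => absurd hj1 (by omega))

theorem nat_antitone_stab (c : ℕ → ℕ) (hc : ∀ n, c (n+1) ≤ c n) :
    ∃ N, ∀ m, N ≤ m → c m = c N := by
  have hanti : Antitone c := antitone_nat_of_succ_le hc
  obtain ⟨N, hN⟩ : ∃ N, c N = sInf (Set.range c) := by
    obtain ⟨N, hN⟩ := Nat.sInf_mem (Set.range_nonempty c)
    exact ⟨N, hN⟩
  refine ⟨N, fun m hm => le_antisymm (hanti hm) ?_⟩
  rw [hN]
  exact Nat.sInf_le ⟨m, rfl⟩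

end GWAThm

open GWAThm in
/-- `A^λ` is Artinian iff `χ_λ` is finite, and simple iff `χ_λ = ∅`,
equivalently iff `λ ∉ Z^σ`. -/
theorem stmt1 {R : Type} [CommRing R] [Algebra ℂ R] (hfg : Algebra.FiniteType ℂ R)
    {σ : R ≃ₐ[ℂ] R} {v : R} (G : GWA R σ v)
    (lam : Ideal R) (hlam : lam.IsMaximal)
    (X : GradedMod G) (hX : IsStdMod G lam X) :
    (IsArtinianGr X ↔ (chiSet σ v lam).Finite) ∧
    (IsSimpleGr X ↔ chiSet σ v lam = ∅) ∧
    (IsSimpleGr X ↔ ∀ n : ℤ, (σ ^ n) v ∉ lam) := by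
  classical
  obtain ⟨x, hx0, hspan, hann⟩ := hX
  let S : StdM G lam X := ⟨x, hx0, hspan, hann⟩
  have hgrspan : ∀ T : Set ℤ, IsGradedSub X (Submodule.span G.A (S.xe '' T)) := fun T =>
    gradedSub_span _ (fun mm hmm => by
      obtain ⟨j, _, rfl⟩ := hmm
      exact ⟨j, xe_mem S j⟩)
  have hempty : chiSet σ v lam = ∅ ↔ ∀ n : ℤ, (σ ^ n) v ∉ lam := by
    rw [Set.eq_empty_iff_forall_notMem]
    exact Iff.rfl
  have hsimple : IsSimpleGr X ↔ ∀ n : ℤ, (σ ^ n) v ∉ lam := by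
    constructor
    · intro hsimp n hn
      rcases le_or_gt 1 n with hn1 | hn1
      · rcases hsimp.2 _ (hgrspan {j | n ≤ j}) with hbot | htop
        · have hxin : S.xe n ∈ Submodule.span G.A (S.xe '' {j | n ≤ j}) :=
            Submodule.subset_span ⟨n, show n ≤ n from le_rfl, rfl⟩
          rw [hbot] at hxin
          exact xe_ne_zero S hlam n ((Submodule.mem_bot _).mp hxin)
        · have h0 : S.xe 0 ∈ Submodule.span G.A (S.xe '' {j | n ≤ j}) := by
            rw [htop]; trivial
          refine xe_notmem_span S hlam _ (fun j hj => ?_) h0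
          have hj' : n ≤ j := hj
          exact prodv_mem lam hn (Or.inl ⟨by omega, by omega, by omega⟩)
      · rcases hsimp.2 _ (hgrspan {j | j ≤ n - 1}) with hbot | htop
        · have hxin : S.xe (n-1) ∈ Submodule.span G.A (S.xe '' {j | j ≤ n - 1}) :=
            Submodule.subset_span ⟨n-1, show n-1 ≤ n-1 from le_rfl, rfl⟩
          rw [hbot] at hxin
          exact xe_ne_zero S hlam (n-1) ((Submodule.mem_bot _).mp hxin)
        · have h0 : S.xe 0 ∈ Submodule.span G.A (S.xe '' {j | j ≤ n - 1}) := by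
            rw [htop]; trivial
          refine xe_notmem_span S hlam _ (fun j hj => ?_) h0
          have hj' : j ≤ n - 1 := hj
          exact prodv_mem lam hn (Or.inr ⟨by omega, by omega, by omega⟩)
    · intro hv
      refine ⟨⟨S.xe 0, xe_ne_zero S hlam 0⟩, fun N hgr => ?_⟩
      by_cases hbot : N = ⊥
      · exact Or.inl hbot
      right
      obtain ⟨mm, hmmN, hmm0⟩ : ∃ mm ∈ N, mm ≠ (0 : X.M) := by
        by_contra h
        push_neg at h
        exact hbot ((Submodule.eq_bot_iff N).mpr h)
      obtain ⟨s, g, hdeg, hmemN, he⟩ := hgr mm hmmN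
      have hex : ∃ i ∈ s, g i ≠ 0 := by
        by_contra h
        push_neg at h
        exact hmm0 (by rw [he]; exact Finset.sum_eq_zero h)
      obtain ⟨i, his, hgi⟩ := hex
      obtain ⟨r, hr⟩ := mem_deg_imp S (hdeg i)
      have hσr : (σ ^ i) r ∉ lam := fun hin =>
        hgi (by rw [hr]; exact (smul_xe_eq_zero_iff S r i).mpr hin)
      have hxeiN : S.xe i ∈ N := comp_step S hlam (hr ▸ hmemN i) hσr
      have hclosed := SN_closed S hlam N
      have h0 : S.xe 0 ∈ N := by
        rcases le_or_gt i 0 with h | h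
        · exact up_chain hclosed i 0 h hxeiN (fun j _ _ _ => hv j)
        · exact down_chain hclosed 0 i (by omega) hxeiN (fun j _ _ _ => hv j)
      rw [xe_zero_eq] at h0
      refine eq_top_iff.mpr ?_
      rw [← S.hspan]
      exact Submodule.span_le.mpr (Set.singleton_subset_iff.mpr h0)
  have hart : IsArtinianGr X ↔ (chiSet σ v lam).Finite := by
    constructor
    · intro hartin
      by_contra hinf
      have huni : chiSet σ v lam ⊆
          (chiSet σ v lam ∩ {j | 1 ≤ j}) ∪ (chiSet σ v lam ∩ {j | j ≤ 0}) := by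
        intro j hj
        rcases le_or_gt 1 j with h | h
        · exact Or.inl ⟨hj, h⟩
        · exact Or.inr ⟨hj, show j ≤ 0 by omega⟩
      have hsplit : (chiSet σ v lam ∩ {j | 1 ≤ j}).Infinite ∨
          (chiSet σ v lam ∩ {j | j ≤ 0}).Infinite := by
        by_contra h
        push_neg at h
        exact hinf (Set.Finite.subset
          (h.1.union h.2) huni)
      rcases hsplit with hplus | hminus
      · have hstep : ∀ b : ℤ, ∃ j, ((σ ^ j) v ∈ lam ∧ 1 ≤ j) ∧ b < j := by
          intro b
          by_contra h
          push_neg at h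
          refine hplus (Set.Finite.subset (Set.finite_Icc 1 b) ?_)
          rintro j ⟨hj1, hj2⟩
          have hj2' : 1 ≤ j := hj2
          exact Set.mem_Icc.mpr ⟨hj2', h j ⟨hj1, hj2'⟩⟩
        choose nxt hnxt using hstep
        let k : ℕ → ℤ := fun n => Nat.rec (nxt 0) (fun _ prev => nxt prev) n
        have hk : ∀ n, (σ ^ (k n)) v ∈ lam ∧ 1 ≤ k n := by
          intro n
          cases n with
          | zero => exact (hnxt 0).1
          | succ n => exact (hnxt (k n)).1
        have hkmono : ∀ n, k n < k (n+1) := fun n => (hnxt (k n)).2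
        set f : ℕ → Submodule G.A X.M :=
          fun n => Submodule.span G.A (S.xe '' {j | k n ≤ j}) with hf
        have hdesc : ∀ n, f (n+1) ≤ f n := fun n => Submodule.span_mono
          (Set.image_mono (fun j hj => le_trans (le_of_lt (hkmono n)) hj))
        obtain ⟨n0, hn0⟩ := hartin f (fun n => hgrspan _) hdesc
        have hin : S.xe (k n0) ∈ f (n0+1) := by
          rw [hn0 (n0+1) (by omega)]
          exact Submodule.subset_span ⟨k n0, show k n0 ≤ k n0 from le_rfl, rfl⟩
        refine xe_notmem_span S hlam {j | k (n0+1) ≤ j} (fun j hj => ?_) hin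
        have hj' : k (n0+1) ≤ j := hj
        have h1 := hkmono n0
        have h2 := (hk n0).2
        exact prodv_mem lam (hk (n0+1)).1 (Or.inl ⟨by omega, by omega, by omega⟩)
      · have hstep : ∀ b : ℤ, ∃ j, ((σ ^ j) v ∈ lam ∧ j ≤ 0) ∧ j < b := by
          intro b
          by_contra h
          push_neg at h
          refine hminus (Set.Finite.subset (Set.finite_Icc b 0) ?_)
          rintro j ⟨hj1, hj2⟩
          have hj2' : j ≤ 0 := hj2
          exact Set.mem_Icc.mpr ⟨h j ⟨hj1, hj2'⟩, hj2'⟩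
        choose nxt hnxt using hstep
        let k : ℕ → ℤ := fun n => Nat.rec (nxt 0) (fun _ prev => nxt prev) n
        have hk : ∀ n, (σ ^ (k n)) v ∈ lam ∧ k n ≤ 0 := by
          intro n
          cases n with
          | zero => exact (hnxt 0).1
          | succ n => exact (hnxt (k n)).1
        have hkmono : ∀ n, k (n+1) < k n := fun n => (hnxt (k n)).2
        set f : ℕ → Submodule G.A X.M :=
          fun n => Submodule.span G.A (S.xe '' {j | j ≤ k n - 1}) with hf
        have hdesc : ∀ n, f (n+1) ≤ f n := fun n => Submodule.span_mono
          (Set.image_mono (fun j hj => by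
            have hj' : j ≤ k (n+1) - 1 := hj
            have := hkmono n
            show j ≤ k n - 1
            omega))
        obtain ⟨n0, hn0⟩ := hartin f (fun n => hgrspan _) hdesc
        have hin : S.xe (k n0 - 1) ∈ f (n0+1) := by
          rw [hn0 (n0+1) (by omega)]
          exact Submodule.subset_span ⟨k n0 - 1, show k n0 - 1 ≤ k n0 - 1 from le_rfl, rfl⟩
        refine xe_notmem_span S hlam {j | j ≤ k (n0+1) - 1} (fun j hj => ?_) hin
        have hj' : j ≤ k (n0+1) - 1 := hj
        have h1 := hkmono n0
        have h2 := (hk (n0+1)).2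
        exact prodv_mem lam (hk (n0+1)).1 (Or.inr ⟨by omega, by omega, by omega⟩)
    · intro hfin f hgr hdesc
      set F : Finset ℤ := hfin.toFinset ∪ hfin.toFinset.image (· - 1) ∪ {0} with hF
      set c : ℕ → ℕ := fun n => (F.filter (fun j => S.xe j ∈ f n)).card with hc
      have hanti : ∀ a b : ℕ, a ≤ b → f b ≤ f a := fun a b h =>
        antitone_nat_of_succ_le hdesc h
      have hmono : ∀ n, c (n+1) ≤ c n := by
        intro n
        refine Finset.card_le_card ?_
        intro j hj
        rw [Finset.mem_filter] at hj ⊢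
        exact ⟨hj.1, hdesc n hj.2⟩
      obtain ⟨n0, hn0⟩ := nat_antitone_stab c hmono
      refine ⟨n0, fun m hm => ?_⟩
      have hle : f m ≤ f n0 := hanti n0 m hm
      have hsub2 : F.filter (fun j => S.xe j ∈ f m) ⊆ F.filter (fun j => S.xe j ∈ f n0) := by
        intro j hj
        rw [Finset.mem_filter] at hj ⊢
        exact ⟨hj.1, hle hj.2⟩
      have hcard : (F.filter (fun j => S.xe j ∈ f n0)).card ≤
          (F.filter (fun j => S.xe j ∈ f m)).card := le_of_eq (hn0 m hm).symm
      have hFeq := Finset.eq_of_subset_of_card_le hsub2 hcard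
      have hSNsub : {j : ℤ | S.xe j ∈ f m} ⊆ {j | S.xe j ∈ f n0} := fun j hj => hle hj
      have hFiff : ∀ j ∈ F, (j ∈ {j : ℤ | S.xe j ∈ f m} ↔ j ∈ {j : ℤ | S.xe j ∈ f n0}) := by
        intro j hj
        constructor
        · intro h
          exact hle h
        · intro h
          have hjmem : j ∈ F.filter (fun j => S.xe j ∈ f n0) := Finset.mem_filter.mpr ⟨hj, h⟩
          rw [← hFeq] at hjmem
          exact (Finset.mem_filter.mp hjmem).2
      have hSN2 := DL hfin (SN_closed S hlam (f m)) (SN_closed S hlam (f n0)) hSNsub hFiff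
      exact le_antisymm hle (graded_le S hlam (hgr n0) (fun n hn => hSN2 hn))
  exact ⟨hart, hsimple.trans hempty.symm, hsimple⟩
end
end

section
/- A^λ has a unique maximal graded submodule; let S^λ denote the corresponding simple quotient. Every simple graded A-module is isomorphic to S^λ[i] for some maximal ideal λ of R and some i ∈ ℤ. -/
noncomputable section

variable {R : Type} [CommRing R] [Algebra ℂ R] {σ : R ≃ₐ[ℂ] R} {v : R}

variable {G : GWA R σ v}

namespace GWAaux

open Finset in
theorem sum_extend {M : Type} [AddCommGroup M] {s t : Finset ℤ} (hst : s ⊆ t)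
    {g : ℤ → M} (hg : ∀ i ∉ s, g i = 0) : ∑ i ∈ t, g i = ∑ i ∈ s, g i :=
  (Finset.sum_subset hst (fun i _ hi => hg i hi)).symm

variable {R : Type} [CommRing R] [Algebra ℂ R] {σ : R ≃ₐ[ℂ] R} {v : R} {G : GWA R σ v}

noncomputable def supp (X : GradedMod G) (m : X.M) : Finset ℤ := (X.decomp m).choose

noncomputable def comp (X : GradedMod G) (m : X.M) (i : ℤ) : X.M :=
  if i ∈ supp X m then (X.decomp m).choose_spec.choose i else 0

theorem comp_mem (X : GradedMod G) (m : X.M) (i : ℤ) : comp X m i ∈ X.deg i := by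
  unfold comp; split
  · exact (X.decomp m).choose_spec.choose_spec.1 i
  · exact (X.deg i).zero_mem

theorem comp_not_mem (X : GradedMod G) {m : X.M} {i : ℤ} (h : i ∉ supp X m) :
    comp X m i = 0 := if_neg h

theorem sum_comp (X : GradedMod G) (m : X.M) : m = ∑ i ∈ supp X m, comp X m i := by
  have h := (X.decomp m).choose_spec.choose_spec.2
  conv_lhs => rw [h]
  exact Finset.sum_congr rfl fun i hi => (by rw [comp, if_pos hi] : comp X m i = _).symm

theorem comp_eq (X : GradedMod G) (m : X.M) (t : Finset ℤ) (h : ℤ → X.M)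
    (hh : ∀ i, h i ∈ X.deg i) (hsum : m = ∑ i ∈ t, h i) (i : ℤ) :
    comp X m i = if i ∈ t then h i else 0 := by
  by_cases hi : i ∈ supp X m ∪ t
  · set f : ℤ → X.M := fun j => comp X m j - (if j ∈ t then h j else 0) with hf
    have hfd : ∀ j, f j ∈ X.deg j := fun j => by
      refine (X.deg j).sub_mem (comp_mem X m j) ?_
      split
      · exact hh j
      · exact (X.deg j).zero_mem
    have hs1 : ∑ j ∈ supp X m ∪ t, comp X m j = m := by
      rw [sum_extend Finset.subset_union_left (fun j hj => comp_not_mem X hj)]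
      exact (sum_comp X m).symm
    have hs2 : ∑ j ∈ supp X m ∪ t, (if j ∈ t then h j else 0) = m := by
      rw [sum_extend Finset.subset_union_right (fun j hj => if_neg hj)]
      rw [hsum]
      exact Finset.sum_congr rfl fun j hj => if_pos hj
    have hz : ∑ j ∈ supp X m ∪ t, f j = 0 := by
      simp only [hf, Finset.sum_sub_distrib, hs1, hs2, sub_self]
    have := X.indep _ f hfd hz i hi
    exact sub_eq_zero.mp this
  · simp only [Finset.mem_union, not_or] at hi
    rw [if_neg hi.2]
    exact comp_not_mem X hi.1

theorem comp_of_mem (X : GradedMod G) {m : X.M} {d : ℤ} (hm : m ∈ X.deg d) (i : ℤ) :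
    comp X m i = if i = d then m else 0 := by
  have := comp_eq X m {d} (fun j => if j = d then m else 0)
    (fun j => by
      by_cases hj : j = d
      · rw [if_pos hj, hj]; exact hm
      · rw [if_neg hj]; exact (X.deg j).zero_mem) (by simp) i
  rw [this]
  by_cases hi : i = d <;> simp [hi]

theorem comp_zero (X : GradedMod G) (i : ℤ) : comp X (0 : X.M) i = 0 := by
  have := comp_eq X 0 ∅ (fun _ => 0) (fun j => (X.deg j).zero_mem) (by simp) i
  simpa using this

theorem comp_add (X : GradedMod G) (m m' : X.M) (i : ℤ) :
    comp X (m + m') i = comp X m i + comp X m' i := by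
  have := comp_eq X (m + m') (supp X m ∪ supp X m')
    (fun j => comp X m j + comp X m' j)
    (fun j => (X.deg j).add_mem (comp_mem X m j) (comp_mem X m' j))
    (by rw [Finset.sum_add_distrib,
        sum_extend Finset.subset_union_left (fun j hj => comp_not_mem X hj),
        sum_extend Finset.subset_union_right (fun j hj => comp_not_mem X hj),
        ← sum_comp, ← sum_comp]) i
  rw [this]
  split
  · rfl
  · next hi =>
    simp only [Finset.mem_union, not_or] at hi
    rw [comp_not_mem X hi.1, comp_not_mem X hi.2, add_zero]

theorem comp_sum (X : GradedMod G) {α : Type*} (s : Finset α) (f : α → X.M) (i : ℤ) :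
    comp X (∑ k ∈ s, f k) i = ∑ k ∈ s, comp X (f k) i := by
  classical
  induction s using Finset.induction_on with
  | empty => simpa using comp_zero X i
  | insert a s' hk ih =>
      rw [Finset.sum_insert hk, Finset.sum_insert hk, comp_add, ih]

end GWAaux

namespace GWAaux

variable {R : Type} [CommRing R] [Algebra ℂ R] {σ : R ≃ₐ[ℂ] R} {v : R}

/-- `A` as a graded module over itself. -/
def Aself (G : GWA R σ v) : GradedMod G where
  M := G.A
  deg := G.deg
  smul_mem := fun ha hb => by rw [smul_eq_mul]; exact G.mul_mem ha hb
  decomp := G.decomp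
  indep := G.indep

variable {G : GWA R σ v}

theorem one_mem_deg : (1 : G.A) ∈ G.deg 0 := by
  have := G.algmap_mem 1
  rwa [map_one] at this

theorem tp_pow_mem (k : ℕ) : G.tp ^ k ∈ G.deg (k : ℤ) := by
  induction k with
  | zero => rw [pow_zero]; exact one_mem_deg
  | succ k ih =>
      have := G.mul_mem ih G.tp_mem
      rw [← pow_succ] at this
      rwa [show ((k:ℤ) + 1) = ((k+1 : ℕ) : ℤ) by push_cast; ring] at this

theorem tm_pow_mem (k : ℕ) : G.tm ^ k ∈ G.deg (-(k : ℤ)) := by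
  induction k with
  | zero => rw [pow_zero]; simpa using one_mem_deg
  | succ k ih =>
      have := G.mul_mem ih G.tm_mem
      rw [← pow_succ] at this
      rwa [show (-(k:ℤ) + -1) = -((k+1 : ℕ) : ℤ) by push_cast; ring] at this

/-- The canonical homogeneous basis element of degree `n`. -/
noncomputable def bb (G : GWA R σ v) (n : ℤ) : G.A :=
  if 0 ≤ n then G.tp ^ n.toNat else G.tm ^ (-n).toNat

theorem bb_mem (n : ℤ) : bb G n ∈ G.deg n := by
  unfold bb
  split
  · next h => have := tp_pow_mem (G := G) n.toNat; rwa [Int.toNat_of_nonneg h] at this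
  · next h =>
      have := tm_pow_mem (G := G) (-n).toNat
      rwa [Int.toNat_of_nonneg (by omega), neg_neg] at this

theorem exists_emb_mul_bb {a : G.A} {n : ℤ} (ha : a ∈ G.deg n) :
    ∃ r : R, a = G.emb r * bb G n := by
  unfold bb
  split
  · next h =>
      obtain ⟨r, hr, -⟩ := G.free_pos n.toNat (a := a) (by rwa [Int.toNat_of_nonneg h])
      exact ⟨r, hr⟩
  · next h =>
      obtain ⟨r, hr, -⟩ := G.free_neg (-n).toNat (a := a)
        (by rwa [Int.toNat_of_nonneg (by omega), neg_neg])
      exact ⟨r, hr⟩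

theorem emb_inj : Function.Injective G.emb := by
  intro r r' h
  obtain ⟨u, -, hu⟩ := G.free_pos 0 (a := G.emb r) (by simpa using G.emb_mem r)
  have h1 : r = u := hu r (by simp)
  have h2 : r' = u := hu r' (by simp [h])
  rw [h1, h2]

theorem tp_mul_emb (s : R) : G.tp * G.emb s = G.emb (σ.symm s) * G.tp := by
  have := G.rel1 (σ.symm s)
  rwa [AlgEquiv.apply_symm_apply, eq_comm] at this

theorem tm_mul_emb (s : R) : G.tm * G.emb s = G.emb (σ s) * G.tm := (G.rel2 s).symm

theorem tp_pow_mul_emb (k : ℕ) (s : R) :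
    G.tp ^ k * G.emb s = G.emb ((σ⁻¹ ^ k) s) * G.tp ^ k := by
  induction k with
  | zero => simp
  | succ k ih =>
      rw [pow_succ', mul_assoc, ih, show (σ⁻¹ : R ≃ₐ[ℂ] R) = σ.symm from rfl, ← mul_assoc,
        tp_mul_emb, mul_assoc, ← pow_succ']
      congr 2
      rw [pow_succ']
      rfl

theorem tm_pow_mul_emb (k : ℕ) (s : R) :
    G.tm ^ k * G.emb s = G.emb ((σ ^ k) s) * G.tm ^ k := by
  induction k with
  | zero => simp
  | succ k ih =>
      rw [pow_succ', mul_assoc, ih, ← mul_assoc, tm_mul_emb, mul_assoc, ← pow_succ']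
      congr 2
      rw [pow_succ']
      rfl

theorem bb_mul_emb (n : ℤ) (s : R) :
    bb G n * G.emb s = G.emb ((σ ^ (-n)) s) * bb G n := by
  unfold bb
  split
  · next h =>
      rw [tp_pow_mul_emb]
      congr 3
      rw [← zpow_natCast σ⁻¹, Int.toNat_of_nonneg h, inv_zpow, ← zpow_neg]
  · next h =>
      rw [tm_pow_mul_emb]
      congr 3
      rw [← zpow_natCast σ, Int.toNat_of_nonneg (show (0:ℤ) ≤ -n by omega)]

theorem emb_mul_bb (n : ℤ) (s : R) :
    G.emb s * bb G n = bb G n * G.emb ((σ ^ n) s) := by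
  rw [bb_mul_emb]
  congr 2
  rw [← AlgEquiv.mul_apply, zpow_neg, inv_mul_cancel, AlgEquiv.one_apply]

end GWAaux

namespace GWAaux

variable {R : Type} [CommRing R] [Algebra ℂ R] {σ : R ≃ₐ[ℂ] R} {v : R} {G : GWA R σ v}

noncomputable def suppA (G : GWA R σ v) (z : G.A) : Finset ℤ := supp (Aself G) z

noncomputable def compA (G : GWA R σ v) (z : G.A) (i : ℤ) : G.A := comp (Aself G) z i

theorem compA_mem (z : G.A) (i : ℤ) : compA G z i ∈ G.deg i := comp_mem (Aself G) z i

theorem sum_compA (z : G.A) : z = ∑ i ∈ suppA G z, compA G z i := sum_comp (Aself G) z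

theorem compA_of_mem {z : G.A} {d : ℤ} (hz : z ∈ G.deg d) (i : ℤ) :
    compA G z i = if i = d then z else 0 := comp_of_mem (Aself G) hz i

theorem compA_zero (i : ℤ) : compA G (0 : G.A) i = 0 := comp_zero (Aself G) i

theorem compA_add (z z' : G.A) (i : ℤ) :
    compA G (z + z') i = compA G z i + compA G z' i := comp_add (Aself G) z z' i

theorem compA_sum {α : Type*} (s : Finset α) (f : α → G.A) (i : ℤ) :
    compA G (∑ k ∈ s, f k) i = ∑ k ∈ s, compA G (f k) i := comp_sum (Aself G) s f i

theorem compA_eq (z : G.A) (t : Finset ℤ) (h : ℤ → G.A)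
    (hh : ∀ i, h i ∈ G.deg i) (hsum : z = ∑ i ∈ t, h i) (i : ℤ) :
    compA G z i = if i ∈ t then h i else 0 := comp_eq (Aself G) z t h hh hsum i

theorem emb_mul_comm (s w : R) (c : G.A) :
    G.emb s * (G.emb w * c) = G.emb w * (G.emb s * c) := by
  rw [← mul_assoc, ← map_mul, mul_comm s w, map_mul, mul_assoc]

theorem smul_eq_mulA (a z : G.A) : a • z = a * z := rfl

end GWAaux

namespace GWAaux

variable {R : Type} [CommRing R] [Algebra ℂ R] {σ : R ≃ₐ[ℂ] R} {v : R} {G : GWA R σ v}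

theorem bb_zero : bb G 0 = 1 := by simp [bb]

theorem expand_mul (u w : G.A) :
    u * w = ∑ j ∈ suppA G u, ∑ i ∈ suppA G w,
      compA G u j * compA G w i := by
  conv_lhs => rw [sum_compA u, sum_compA w]
  rw [Finset.sum_mul_sum]

/-- Key lemma: the homogeneous components of elements of the left ideal `Aλ`. -/
theorem key (lam : Ideal R) {z : G.A}
    (hz : z ∈ Submodule.span G.A (G.emb '' (lam : Set R))) :
    ∀ n : ℤ, ∃ l ∈ lam, compA G z n = G.emb ((σ ^ (-n)) l) * bb G n := by
  induction hz using Submodule.span_induction with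
  | mem a ha =>
      intro n
      obtain ⟨l, hl, rfl⟩ := ha
      have hc := compA_of_mem (G.emb_mem l) n
      by_cases hn : n = 0
      · subst hn
        refine ⟨l, hl, ?_⟩
        rw [hc, if_pos rfl, neg_zero, zpow_zero, AlgEquiv.one_apply, bb_zero, mul_one]
      · refine ⟨0, lam.zero_mem, ?_⟩
        rw [hc, if_neg hn, map_zero, map_zero, zero_mul]
  | zero =>
      intro n
      exact ⟨0, lam.zero_mem, by rw [compA_zero, map_zero, map_zero, zero_mul]⟩
  | add x y hx hy ihx ihy =>
      intro n
      obtain ⟨l1, hl1, h1⟩ := ihx n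
      obtain ⟨l2, hl2, h2⟩ := ihy n
      exact ⟨l1 + l2, lam.add_mem hl1 hl2, by
        rw [compA_add, h1, h2, map_add, map_add, add_mul]⟩
  | smul a x hx ih =>
      intro n
      have hc : compA G (a • x) n =
          ∑ j ∈ suppA G a, ∑ i ∈ suppA G x,
            compA G (compA G a j * compA G x i) n := by
        rw [smul_eq_mulA, expand_mul, compA_sum]
        exact Finset.sum_congr rfl fun j _ => compA_sum _ _ n
      rw [hc]
      apply Finset.sum_induction _ (fun c => ∃ l ∈ lam, c = G.emb ((σ ^ (-n)) l) * bb G n)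
      · rintro b c ⟨l1, hl1, rfl⟩ ⟨l2, hl2, rfl⟩
        exact ⟨l1 + l2, lam.add_mem hl1 hl2, by rw [map_add, map_add, add_mul]⟩
      · exact ⟨0, lam.zero_mem, by rw [map_zero, map_zero, zero_mul]⟩
      intro j _
      apply Finset.sum_induction _ (fun c => ∃ l ∈ lam, c = G.emb ((σ ^ (-n)) l) * bb G n)
      · rintro b c ⟨l1, hl1, rfl⟩ ⟨l2, hl2, rfl⟩
        exact ⟨l1 + l2, lam.add_mem hl1 hl2, by rw [map_add, map_add, add_mul]⟩
      · exact ⟨0, lam.zero_mem, by rw [map_zero, map_zero, zero_mul]⟩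
      intro i _
      -- the individual term
      have hmem : compA G a j * compA G x i ∈ G.deg (j + i) :=
        G.mul_mem (compA_mem a j) (compA_mem x i)
      have hterm := compA_of_mem hmem n
      by_cases hn : n = j + i
      · rw [hterm, if_pos hn]
        subst hn
        obtain ⟨r, hr⟩ := exists_emb_mul_bb (compA_mem a j)
        obtain ⟨l, hl, hli⟩ := ih i
        obtain ⟨w, hw⟩ := exists_emb_mul_bb (G.mul_mem (bb_mem (G := G) j) (bb_mem (G := G) i))
        refine ⟨(σ ^ (j + i)) (r * w) * l, lam.mul_mem_left _ hl, ?_⟩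
        have hz1 : ((σ : R ≃ₐ[ℂ] R) ^ (-(j + i))) ((σ ^ (j + i)) (r * w) * l)
            = r * w * ((σ ^ (-(j+i))) l) := by
          rw [map_mul, ← AlgEquiv.mul_apply, ← zpow_add, neg_add_cancel, zpow_zero,
            AlgEquiv.one_apply]
        have hz2 : ((σ : R ≃ₐ[ℂ] R) ^ (-j)) (((σ : R ≃ₐ[ℂ] R) ^ (-i)) l)
            = (σ ^ (-(j+i))) l := by
          rw [← AlgEquiv.mul_apply, ← zpow_add, neg_add]
        calc compA G a j * compA G x i
            = (G.emb r * bb G j) * (G.emb ((σ ^ (-i)) l) * bb G i) := by rw [← hr, ← hli]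
          _ = G.emb r * ((bb G j * G.emb ((σ ^ (-i)) l)) * bb G i) := by
              simp only [mul_assoc]
          _ = G.emb r * ((G.emb ((σ ^ (-j)) ((σ ^ (-i)) l)) * bb G j) * bb G i) := by
              rw [bb_mul_emb]
          _ = G.emb r * (G.emb ((σ ^ (-(j+i))) l) * (bb G j * bb G i)) := by
              rw [hz2]; simp only [mul_assoc]
          _ = G.emb r * (G.emb ((σ ^ (-(j+i))) l) * (G.emb w * bb G (j + i))) := by rw [hw]
          _ = G.emb r * (G.emb w * (G.emb ((σ ^ (-(j+i))) l) * bb G (j + i))) := by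
              rw [emb_mul_comm ((σ ^ (-(j+i))) l) w]
          _ = G.emb (r * w * ((σ ^ (-(j+i))) l)) * bb G (j + i) := by
              simp only [map_mul, mul_assoc]
          _ = G.emb ((σ ^ (-(j + i))) ((σ ^ (j + i)) (r * w) * l)) * bb G (j + i) := by
              rw [hz1]
      · rw [hterm, if_neg hn]
        exact ⟨0, lam.zero_mem, by rw [map_zero, map_zero, zero_mul]⟩

theorem key_mem (lam : Ideal R) {z : G.A}
    (hz : z ∈ Submodule.span G.A (G.emb '' (lam : Set R))) (n : ℤ) :
    compA G z n ∈ Submodule.span G.A (G.emb '' (lam : Set R)) := by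
  obtain ⟨l, hl, h⟩ := key lam hz n
  rw [h, ← bb_mul_emb]
  exact Submodule.smul_mem _ _ (Submodule.subset_span ⟨l, hl, rfl⟩)

theorem one_not_mem_span (lam : Ideal R) (hlam : lam ≠ ⊤) :
    (1 : G.A) ∉ Submodule.span G.A (G.emb '' (lam : Set R)) := by
  intro h
  obtain ⟨l, hl, hc⟩ := key lam h 0
  have h1 : compA G (1 : G.A) 0 = 1 := by
    rw [compA_of_mem one_mem_deg, if_pos rfl]
  rw [h1, neg_zero, zpow_zero, AlgEquiv.one_apply, bb_zero, mul_one] at hc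
  have : l = (1 : R) := emb_inj (by rw [← hc, map_one])
  exact hlam (lam.eq_top_iff_one.mpr (this ▸ hl))

end GWAaux

namespace GWAaux

theorem exists_complex {R : Type} [CommRing R] [Algebra ℂ R]
    (hfg : Algebra.FiniteType ℂ R) (lam : Ideal R) (hmax : lam.IsMaximal) (r : R) :
    ∃ c : ℂ, r - algebraMap ℂ R c ∈ lam := by
  haveI := hmax
  letI : Field (R ⧸ lam) := Ideal.Quotient.field lam
  have : Algebra.FiniteType ℂ (R ⧸ lam) :=
    Algebra.FiniteType.of_surjective (Ideal.Quotient.mkₐ ℂ lam)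
      (Ideal.Quotient.mkₐ_surjective ℂ lam)
  have : Module.Finite ℂ (R ⧸ lam) := finite_of_finite_type_of_isJacobsonRing ℂ (R ⧸ lam)
  have : Algebra.IsIntegral ℂ (R ⧸ lam) := Algebra.IsIntegral.of_finite ℂ (R ⧸ lam)
  obtain ⟨c, hc⟩ := (IsAlgClosed.algebraMap_bijective_of_isIntegral (k := ℂ) (K := R ⧸ lam)).2
    (Ideal.Quotient.mk lam r)
  refine ⟨c, ?_⟩
  rw [← Ideal.Quotient.eq_zero_iff_mem, map_sub]
  rw [show (Ideal.Quotient.mk lam) (algebraMap ℂ R c) = algebraMap ℂ (R ⧸ lam) c from rfl, hc,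
    sub_self]

variable {R : Type} [CommRing R] [Algebra ℂ R] {σ : R ≃ₐ[ℂ] R} {v : R} {G : GWA R σ v}

theorem gradedSub_comp {X : GradedMod G} {N : Submodule G.A X.M} (hN : IsGradedSub X N)
    {m : X.M} (hm : m ∈ N) (i : ℤ) : comp X m i ∈ N := by
  obtain ⟨s, g, hg, hgN, hsum⟩ := hN m hm
  rw [comp_eq X m s g hg hsum i]
  split
  · exact hgN i
  · exact N.zero_mem

theorem gradedSub_bot (X : GradedMod G) : IsGradedSub X ⊥ := by
  intro m hm
  rw [Submodule.mem_bot] at hm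
  exact ⟨∅, fun _ => 0, fun i => (X.deg i).zero_mem,
    fun i => Submodule.zero_mem _, by simp [hm]⟩

theorem comp_smul_mem_span (X : GradedMod G) {s : X.M} {d : ℤ} (hs : s ∈ X.deg d)
    (a : G.A) (i : ℤ) : comp X (a • s) i ∈ Submodule.span G.A {s} := by
  have hrw : a • s = ∑ j ∈ suppA G a, compA G a j • s := by
    conv_lhs => rw [sum_compA a]
    rw [Finset.sum_smul]
  rw [hrw, comp_sum]
  apply Submodule.sum_mem
  intro j _
  have hj : compA G a j • s ∈ X.deg (j + d) := X.smul_mem (compA_mem a j) hs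
  rw [comp_of_mem X hj]
  split
  · exact Submodule.smul_mem _ _ (Submodule.mem_span_singleton_self s)
  · exact Submodule.zero_mem _

theorem span_singleton_graded (X : GradedMod G) {s : X.M} {d : ℤ} (hs : s ∈ X.deg d) :
    IsGradedSub X (Submodule.span G.A {s}) := by
  intro u hu
  obtain ⟨a, rfl⟩ := Submodule.mem_span_singleton.mp hu
  exact ⟨supp X (a • s), comp X (a • s), comp_mem X (a • s),
    fun i => comp_smul_mem_span X hs a i, sum_comp X (a • s)⟩

/-- If a homogeneous `s` generates everything, homogeneous elements are homogeneous multiples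
of `s`. -/
theorem exists_homog_smul (X : GradedMod G) {s : X.M} {d : ℤ} (hs : s ∈ X.deg d)
    (hspan : Submodule.span G.A {s} = ⊤) {m' : X.M} {i' : ℤ} (hm' : m' ∈ X.deg i') :
    ∃ a ∈ G.deg (i' - d), a • s = m' := by
  obtain ⟨a, ha⟩ := Submodule.mem_span_singleton.mp (hspan ▸ Submodule.mem_top (x := m'))
  classical
  set t : Finset ℤ := (suppA G a).image (· + d) with ht
  set h : ℤ → X.M := fun k => compA G a (k - d) • s with hh
  have hhd : ∀ k, h k ∈ X.deg k := fun k => by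
    have := X.smul_mem (compA_mem a (k - d)) hs
    rwa [sub_add_cancel] at this
  have hsum : m' = ∑ k ∈ t, h k := by
    rw [← ha, ht, Finset.sum_image (by intro u _ w _ huw; exact add_right_cancel huw)]
    conv_lhs => rw [sum_compA a]
    rw [Finset.sum_smul]
    exact Finset.sum_congr rfl fun j _ => by rw [hh]; simp
  have := comp_eq X m' t h hhd hsum i'
  rw [comp_of_mem X hm', if_pos rfl] at this
  by_cases hit : i' ∈ t
  · rw [if_pos hit] at this
    exact ⟨compA G a (i' - d), compA_mem a (i' - d), this.symm⟩
  · rw [if_neg hit] at this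
    exact ⟨0, (G.deg _).zero_mem, by rw [zero_smul, this]⟩

end GWAaux

namespace GWAaux

variable {R : Type} [CommRing R] [Algebra ℂ R] {σ : R ≃ₐ[ℂ] R} {v : R} {G : GWA R σ v}

theorem std_x_ne {lam : Ideal R} (hmax : lam.IsMaximal) {X : GradedMod G} {x : X.M}
    (hxann : ∀ a : G.A, a • x = 0 ↔ a ∈ Submodule.span G.A (G.emb '' (lam : Set R))) :
    x ≠ 0 := by
  intro h
  have h1 : (1 : G.A) • x = 0 := by rw [h, smul_zero]
  exact one_not_mem_span lam hmax.ne_top ((hxann 1).mp h1)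

theorem std_deg0 (hfg : Algebra.FiniteType ℂ R) {lam : Ideal R} (hmax : lam.IsMaximal)
    {X : GradedMod G} {x : X.M} (hx0 : x ∈ X.deg 0)
    (hxspan : Submodule.span G.A {x} = ⊤)
    (hxann : ∀ a : G.A, a • x = 0 ↔ a ∈ Submodule.span G.A (G.emb '' (lam : Set R)))
    {m : X.M} (hm : m ∈ X.deg 0) :
    ∃ c : ℂ, m = algebraMap ℂ G.A c • x := by
  obtain ⟨a, ha, rfl⟩ := exists_homog_smul X hx0 hxspan hm
  have ha0 : a ∈ G.deg 0 := by simpa using ha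
  obtain ⟨r, hr⟩ := exists_emb_mul_bb ha0
  rw [bb_zero, mul_one] at hr
  obtain ⟨c, hc⟩ := exists_complex hfg lam hmax r
  refine ⟨c, ?_⟩
  have h2 : G.emb (r - algebraMap ℂ R c) • x = 0 :=
    (hxann _).mpr (Submodule.subset_span ⟨_, hc, rfl⟩)
  have h3 : G.emb r = G.emb (r - algebraMap ℂ R c) + algebraMap ℂ G.A c := by
    rw [map_sub, G.emb.commutes, sub_add_cancel]
  rw [hr, h3, add_smul, h2, zero_add]

theorem std_comp_zero (hfg : Algebra.FiniteType ℂ R) {lam : Ideal R} (hmax : lam.IsMaximal)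
    {X : GradedMod G} {x : X.M} (hx0 : x ∈ X.deg 0)
    (hxspan : Submodule.span G.A {x} = ⊤)
    (hxann : ∀ a : G.A, a • x = 0 ↔ a ∈ Submodule.span G.A (G.emb '' (lam : Set R)))
    {N : Submodule G.A X.M} (hN : IsGradedSub X N) (hNt : N ≠ ⊤)
    {m : X.M} (hm : m ∈ N) : comp X m 0 = 0 := by
  have h1 : comp X m 0 ∈ N := gradedSub_comp hN hm 0
  obtain ⟨c, hc⟩ := std_deg0 hfg hmax hx0 hxspan hxann (comp_mem X m 0)
  by_cases hc0 : c = 0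
  · rw [hc, hc0, map_zero, zero_smul]
  · exfalso
    have hxN : x ∈ N := by
      have := N.smul_mem (algebraMap ℂ G.A c⁻¹) h1
      rwa [hc, smul_smul, ← map_mul, inv_mul_cancel₀ hc0, map_one, one_smul] at this
    refine hNt (top_le_iff.mp ?_)
    rw [← hxspan]
    exact Submodule.span_le.mpr (Set.singleton_subset_iff.mpr hxN)

theorem part1 (hfg : Algebra.FiniteType ℂ R) {lam : Ideal R} (hmax : lam.IsMaximal)
    (X : GradedMod G) (hX : IsStdMod G lam X) :
    ∃ N : Submodule G.A X.M, (IsGradedSub X N ∧ N ≠ ⊤) ∧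
      ∀ N' : Submodule G.A X.M, IsGradedSub X N' → N' ≠ ⊤ → N' ≤ N := by
  obtain ⟨x, hx0, hxspan, hxann⟩ := hX
  have hxne : x ≠ 0 := std_x_ne hmax hxann
  set T : Set X.M :=
    {m | ∃ N' : Submodule G.A X.M, IsGradedSub X N' ∧ N' ≠ ⊤ ∧ m ∈ N'} with hT
  have hbotne : (⊥ : Submodule G.A X.M) ≠ ⊤ := by
    intro h
    exact hxne (Submodule.mem_bot G.A |>.mp (by rw [h]; trivial))
  have hP : ∀ m ∈ Submodule.span G.A T,
      ∃ N' : Submodule G.A X.M, IsGradedSub X N' ∧ N' ≠ ⊤ ∧ m ∈ N' := by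
    intro m hm
    induction hm using Submodule.span_induction with
    | mem u hu => exact hu
    | zero => exact ⟨⊥, gradedSub_bot X, hbotne, Submodule.zero_mem ⊥⟩
    | add y z hy hz ihy ihz =>
        obtain ⟨N1, hN1g, hN1t, hyN⟩ := ihy
        obtain ⟨N2, hN2g, hN2t, hzN⟩ := ihz
        have hsupg : IsGradedSub X (N1 ⊔ N2) := by
          intro u hu
          obtain ⟨u1, hu1, u2, hu2, rfl⟩ := Submodule.mem_sup.mp hu
          refine ⟨supp X (u1 + u2), comp X (u1 + u2), comp_mem X _, fun i => ?_,
            sum_comp X _⟩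
          rw [comp_add]
          exact Submodule.add_mem _ (Submodule.mem_sup_left (gradedSub_comp hN1g hu1 i))
            (Submodule.mem_sup_right (gradedSub_comp hN2g hu2 i))
        have hsupt : N1 ⊔ N2 ≠ ⊤ := by
          intro h
          have hx' : x ∈ N1 ⊔ N2 := by rw [h]; trivial
          obtain ⟨u1, hu1, u2, hu2, hxu⟩ := Submodule.mem_sup.mp hx'
          have hz0 : comp X x 0 = 0 := by
            rw [← hxu, comp_add,
              std_comp_zero hfg hmax hx0 hxspan hxann hN1g hN1t hu1,
              std_comp_zero hfg hmax hx0 hxspan hxann hN2g hN2t hu2, add_zero]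
          rw [comp_of_mem X hx0, if_pos rfl] at hz0
          exact hxne hz0
        exact ⟨N1 ⊔ N2, hsupg, hsupt,
          Submodule.add_mem _ (Submodule.mem_sup_left hyN) (Submodule.mem_sup_right hzN)⟩
    | smul a y hy ihy =>
        obtain ⟨N', h1, h2, h3⟩ := ihy
        exact ⟨N', h1, h2, N'.smul_mem a h3⟩
  refine ⟨Submodule.span G.A T, ⟨?_, ?_⟩, ?_⟩
  · intro m hm
    obtain ⟨N', hg, ht, hmN⟩ := hP m hm
    obtain ⟨s, g, h1, h2, h3⟩ := hg m hmN
    exact ⟨s, g, h1, fun i => Submodule.subset_span ⟨N', hg, ht, h2 i⟩, h3⟩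
  · intro h
    obtain ⟨N', hg, ht, hmN⟩ := hP x (by rw [h]; trivial)
    refine ht (top_le_iff.mp ?_)
    rw [← hxspan]
    exact Submodule.span_le.mpr (Set.singleton_subset_iff.mpr hmN)
  · intro N' hg ht u hu
    exact Submodule.subset_span ⟨N', hg, ht, hu⟩

end GWAaux

namespace GWAaux

variable {R : Type} [CommRing R] [Algebra ℂ R] {σ : R ≃ₐ[ℂ] R} {v : R} {G : GWA R σ v}

theorem part2 (S : GradedMod G) (hS : IsSimpleGr S) :
    ∃ lam : Ideal R, lam.IsMaximal ∧ ∃ X : GradedMod G, IsStdMod G lam X ∧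
      ∃ (i : ℤ) (φ : GHom X S i), Function.Surjective φ.toLin := by
  classical
  obtain ⟨m, hm⟩ := hS.1
  have hex : ∃ i₀, comp S m i₀ ≠ 0 := by
    by_contra h
    push_neg at h
    exact hm (by rw [sum_comp S m]; exact Finset.sum_eq_zero fun i _ => h i)
  obtain ⟨i₀, hs0ne⟩ := hex
  set s₀ : S.M := comp S m i₀ with hs0def
  have hs0 : s₀ ∈ S.deg i₀ := comp_mem S m i₀
  have hgen : ∀ {d : ℤ} {s : S.M}, s ∈ S.deg d → s ≠ 0 → Submodule.span G.A {s} = ⊤ := by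
    intro d s hs hne
    rcases hS.2 _ (span_singleton_graded S hs) with h | h
    · exact absurd ((Submodule.mem_bot G.A).mp (h ▸ Submodule.mem_span_singleton_self s)) hne
    · exact h
  set lam : Ideal R :=
    { carrier := {r : R | G.emb r • s₀ = 0}
      add_mem' := fun {a b} ha hb => by
        simp only [Set.mem_setOf_eq] at *
        rw [map_add, add_smul, ha, hb, add_zero]
      zero_mem' := by simp only [Set.mem_setOf_eq, map_zero, zero_smul]
      smul_mem' := fun c r hr => by
        simp only [Set.mem_setOf_eq, smul_eq_mul] at *
        rw [map_mul, mul_smul, hr, smul_zero] } with hlamdef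
  have hlam_mem : ∀ r : R, r ∈ lam ↔ G.emb r • s₀ = 0 := fun r => Iff.rfl
  have hinv : ∀ r : R, r ∉ lam → ∃ r' : R, r' * r - 1 ∈ lam := by
    intro r hr
    have hs' : G.emb r • s₀ ∈ S.deg i₀ := by
      have := S.smul_mem (G.emb_mem r) hs0
      rwa [zero_add] at this
    have hs'ne : G.emb r • s₀ ≠ 0 := fun h => hr ((hlam_mem r).mpr h)
    obtain ⟨a, ha, has⟩ := exists_homog_smul S hs' (hgen hs' hs'ne) hs0
    have ha0 : a ∈ G.deg 0 := by simpa using ha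
    obtain ⟨r', hr'⟩ := exists_emb_mul_bb ha0
    rw [bb_zero, mul_one] at hr'
    refine ⟨r', ?_⟩
    rw [hlam_mem, map_sub, sub_smul, map_mul, mul_smul, map_one, one_smul, ← hr']
    rw [show a • (G.emb r • s₀) = s₀ from has, sub_self]
  have hmax : lam.IsMaximal := by
    rw [Ideal.isMaximal_iff]
    constructor
    · intro h
      have h1 := (hlam_mem 1).mp h
      rw [map_one, one_smul] at h1
      exact hs0ne h1
    · intro J y hle hy hyJ
      obtain ⟨r', hr'⟩ := hinv y hy
      have := J.sub_mem (J.mul_mem_left r' hyJ) (hle hr')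
      simpa using this
  set I : Submodule G.A G.A := Submodule.span G.A (G.emb '' (lam : Set R)) with hI
  have hann : ∀ z ∈ I, z • s₀ = 0 := by
    intro z hz
    induction hz using Submodule.span_induction with
    | mem u hu =>
        obtain ⟨l, hl, rfl⟩ := hu
        exact (hlam_mem l).mp hl
    | zero => rw [zero_smul]
    | add y z hy hz ihy ihz => rw [add_smul, ihy, ihz, add_zero]
    | smul a y hy ihy => rw [smul_eq_mul, mul_smul, ihy, smul_zero]
  set X : GradedMod G :=
    { M := G.A ⧸ I
      deg := fun n => (G.deg n).map I.mkQ.toAddMonoidHom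
      smul_mem := by
        intro i j a mm ha hmm
        obtain ⟨b, hb, rfl⟩ := hmm
        exact ⟨a * b, G.mul_mem ha hb, by
          show I.mkQ (a * b) = a • I.mkQ b
          rw [← smul_eq_mul, map_smul]⟩
      decomp := by
        intro mm
        obtain ⟨z, rfl⟩ := Submodule.mkQ_surjective I mm
        refine ⟨suppA G z, fun i => I.mkQ (compA G z i),
          fun i => ⟨compA G z i, compA_mem z i, rfl⟩, ?_⟩
        rw [← map_sum]
        exact congrArg _ (sum_compA z)
      indep := by
        intro s g hg hsum i hi
        have hlift : ∀ k : ℤ, ∃ b : G.A, b ∈ G.deg k ∧ I.mkQ b = g k := fun k => by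
          obtain ⟨b, hb, hbe⟩ := hg k
          exact ⟨b, hb, hbe⟩
        choose b hb1 hb2 using hlift
        have hzI : (∑ k ∈ s, b k) ∈ I := by
          have h0 : I.mkQ (∑ k ∈ s, b k) = 0 := by
            rw [map_sum, Finset.sum_congr rfl fun k _ => hb2 k, hsum]
          rwa [Submodule.mkQ_apply, Submodule.Quotient.mk_eq_zero] at h0
        have hcomp := compA_eq (∑ k ∈ s, b k) s b hb1 rfl i
        rw [if_pos hi] at hcomp
        have hbI : b i ∈ I := hcomp ▸ key_mem lam hzI i
        rw [← hb2 i, Submodule.mkQ_apply, Submodule.Quotient.mk_eq_zero]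
        exact hbI } with hXdef
  refine ⟨lam, hmax, X, ?_, ?_⟩
  · -- IsStdMod
    refine ⟨I.mkQ 1, ⟨1, one_mem_deg, rfl⟩, ?_, ?_⟩
    · rw [Submodule.eq_top_iff']
      intro mm
      obtain ⟨z, rfl⟩ := Submodule.mkQ_surjective I mm
      exact Submodule.mem_span_singleton.mpr ⟨z, by rw [← map_smul, smul_eq_mul, mul_one]⟩
    · intro a
      have h1 : a • I.mkQ 1 = I.mkQ a := by rw [← map_smul, smul_eq_mul, mul_one]
      rw [h1, Submodule.mkQ_apply, Submodule.Quotient.mk_eq_zero]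
  · -- the graded surjection
    set f : G.A →ₗ[G.A] S.M := LinearMap.toSpanSingleton G.A S.M s₀ with hf
    have hIker : I ≤ LinearMap.ker f := fun z hz => by
      rw [LinearMap.mem_ker, hf, LinearMap.toSpanSingleton_apply]
      exact hann z hz
    set φlin : (G.A ⧸ I) →ₗ[G.A] S.M := I.liftQ f hIker with hphi
    have hphi_mk : ∀ z : G.A, φlin (I.mkQ z) = z • s₀ := fun z => by
      rw [hphi, Submodule.mkQ_apply, Submodule.liftQ_apply, hf,
        LinearMap.toSpanSingleton_apply]
    refine ⟨i₀, ⟨φlin, ?_⟩, ?_⟩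
    · intro i mm hmm
      obtain ⟨b, hb, rfl⟩ := hmm
      show φlin (I.mkQ b) ∈ S.deg (i + i₀)
      rw [hphi_mk]
      exact S.smul_mem hb hs0
    · intro y
      have hy : y ∈ Submodule.span G.A {s₀} := by rw [hgen hs0 hs0ne]; trivial
      have hle : Submodule.span G.A {s₀} ≤ LinearMap.range φlin := by
        rw [Submodule.span_le, Set.singleton_subset_iff]
        exact ⟨I.mkQ 1, by rw [hphi_mk, one_smul]⟩
      obtain ⟨u, hu⟩ := hle hy
      exact ⟨u, hu⟩

end GWAaux


/-- `A^λ` has a unique (greatest) maximal graded submodule; writing `S^λ` for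
the corresponding simple quotient, every simple graded `A`-module is isomorphic to `S^λ[i]`
for some maximal ideal `λ` and some `i ∈ ℤ`.  (A graded surjection `A^λ → S` of some degree `i`
exhibits `S` as `S^λ[-i]`, since its kernel is necessarily the maximal graded submodule.) -/
theorem stmt2 {R : Type} [CommRing R] [Algebra ℂ R] (hfg : Algebra.FiniteType ℂ R)
    {σ : R ≃ₐ[ℂ] R} {v : R} (G : GWA R σ v) :
    (∀ (lam : Ideal R), lam.IsMaximal → ∀ X : GradedMod G, IsStdMod G lam X →
      ∃ N : Submodule G.A X.M, (IsGradedSub X N ∧ N ≠ ⊤) ∧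
        ∀ N' : Submodule G.A X.M, IsGradedSub X N' → N' ≠ ⊤ → N' ≤ N) ∧
    (∀ S : GradedMod G, IsSimpleGr S →
      ∃ (lam : Ideal R), lam.IsMaximal ∧ ∃ X : GradedMod G, IsStdMod G lam X ∧
        ∃ (i : ℤ) (φ : GHom X S i), Function.Surjective φ.toLin) :=
  ⟨fun _lam hmax X hX => GWAaux.part1 hfg hmax X hX, fun S hS => GWAaux.part2 S hS⟩
end
end

section
/- If λ is a maximal ideal of R with v ∉ λ, then A^λ ≅ A^{σ(λ)}[1] as graded A-modules. -/
noncomputable section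

variable {R : Type} [CommRing R] [Algebra ℂ R] {σ : R ≃ₐ[ℂ] R} {v : R}

variable {G : GWA R σ v}

/-- Homogeneous representative lemma: if `x` has degree 0 and `m = a • x` is
homogeneous of degree `i`, then `m = b • x` for some homogeneous `b` of degree `i`. -/
lemma homog_rep {G : GWA R σ v} (X : GradedMod G) {x : X.M} (hx : x ∈ X.deg 0) {i : ℤ} {m : X.M}
    (hm : m ∈ X.deg i) {a : G.A} (ha : a • x = m) :
    ∃ b ∈ G.deg i, b • x = m := by
  obtain ⟨s, g, hg, hsum⟩ := G.decomp a
  set g' : ℤ → G.A := fun j => if j ∈ s then g j else 0 with hg'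
  have hg'mem : ∀ j, g' j ∈ G.deg j := by
    intro j; dsimp only [g']; split
    exacts [hg j, (G.deg j).zero_mem]
  have hsum' : (∑ j ∈ insert i s, g' j) = a := by
    rw [hsum, ← Finset.sum_subset (Finset.subset_insert i s)]
    · exact Finset.sum_congr rfl (fun j hj => by simp [g', hj])
    · intro j _ hj; simp [g', hj]
  set h : ℤ → X.M := fun j => if j = i then g' j • x - m else g' j • x with hh
  have hhmem : ∀ j, h j ∈ X.deg j := by
    intro j
    have h1 : g' j • x ∈ X.deg j := by
      have := X.smul_mem (hg'mem j) hx
      simpa using this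
    by_cases hji : j = i
    · subst hji; simpa [h] using (X.deg j).sub_mem h1 hm
    · simpa [h, hji] using h1
  have hzero : (∑ j ∈ insert i s, h j) = 0 := by
    have heq : ∀ j, h j = g' j • x - (if j = i then m else 0) := by
      intro j; by_cases hj : j = i <;> simp [h, hj]
    rw [Finset.sum_congr rfl fun j _ => heq j, Finset.sum_sub_distrib,
      Finset.sum_ite_eq' (insert i s) i (fun _ => m), ← Finset.sum_smul, hsum']
    simp [ha]
  have h0 := X.indep (insert i s) h hhmem hzero i (Finset.mem_insert_self i s)
  have hb : g' i • x = m := by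
    have h1 : g' i • x - m = 0 := by simpa [h] using h0
    exact sub_eq_zero.mp h1
  exact ⟨g' i, hg'mem i, hb⟩

/-- If `v ∉ λ` then `A^λ ≅ A^{σ(λ)}[1]` as graded `A`-modules. -/
theorem stmt3 {R : Type} [CommRing R] [Algebra ℂ R] (hfg : Algebra.FiniteType ℂ R)
    {σ : R ≃ₐ[ℂ] R} {v : R} (G : GWA R σ v)
    (lam : Ideal R) (hlam : lam.IsMaximal) (hv : v ∉ lam)
    (X Y : GradedMod G) (hX : IsStdMod G lam X)
    (hY : IsStdMod G (Ideal.map σ.toAlgHom.toRingHom lam) Y) :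
    GIso X Y 1 := by
  classical
  obtain ⟨x, hx0, hxspan, hxann⟩ := hX
  obtain ⟨y, hy0, hyspan, hyann⟩ := hY
  set S : Submodule G.A G.A := Submodule.span G.A (G.emb '' (lam : Set R)) with hS
  set lam' : Ideal R := Ideal.map σ.toAlgHom.toRingHom lam with hlam'
  set T : Submodule G.A G.A := Submodule.span G.A (G.emb '' (lam' : Set R)) with hT
  have hsigma : ∀ r : R, σ.toAlgHom.toRingHom r = σ r := fun r => rfl
  -- right multiplication moves S into T and back, etc.
  have claim1 : ∀ a ∈ S, a * G.tp ∈ T := by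
    intro a ha
    induction ha using Submodule.span_induction with
    | mem z hz =>
        obtain ⟨m, hm, rfl⟩ := hz
        rw [G.rel1 m, ← smul_eq_mul]
        exact T.smul_mem G.tp (Submodule.subset_span ⟨σ m, Ideal.mem_map_of_mem _ hm, rfl⟩)
    | zero => simpa using T.zero_mem
    | add a b _ _ hA hB => rw [add_mul]; exact T.add_mem hA hB
    | smul c a _ hA => rw [smul_eq_mul, mul_assoc, ← smul_eq_mul]; exact T.smul_mem c hA
  have claim2 : ∀ a ∈ T, a * G.tm ∈ S := by
    intro a ha
    induction ha using Submodule.span_induction with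
    | mem z hz =>
        obtain ⟨m', hm', rfl⟩ := hz
        have hsurj : Function.Surjective σ.toAlgHom.toRingHom := σ.surjective
        obtain ⟨m, hm, rfl⟩ := (Ideal.mem_map_iff_of_surjective _ hsurj).mp hm'
        rw [hsigma, G.rel2 m, ← smul_eq_mul]
        exact S.smul_mem G.tm (Submodule.subset_span ⟨m, hm, rfl⟩)
    | zero => simpa using S.zero_mem
    | add a b _ _ hA hB => rw [add_mul]; exact S.add_mem hA hB
    | smul c a _ hA => rw [smul_eq_mul, mul_assoc, ← smul_eq_mul]; exact S.smul_mem c hA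
  have claim3 : ∀ a ∈ S, ∀ r : R, a * G.emb r ∈ S := by
    intro a ha r
    induction ha using Submodule.span_induction with
    | mem z hz =>
        obtain ⟨m, hm, rfl⟩ := hz
        rw [← map_mul]
        exact Submodule.subset_span ⟨m * r, Ideal.mul_mem_right r lam hm, rfl⟩
    | zero => simpa using S.zero_mem
    | add a b _ _ hA hB => rw [add_mul]; exact S.add_mem hA hB
    | smul c a _ hA => rw [smul_eq_mul, mul_assoc, ← smul_eq_mul]; exact S.smul_mem c hA
  -- the element `t₊ • y` has degree 1
  have hty : G.tp • y ∈ Y.deg 1 := by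
    have := Y.smul_mem G.tp_mem hy0
    simpa using this
  -- the projection onto X
  set π : G.A →ₗ[G.A] X.M := LinearMap.toSpanSingleton G.A X.M x with hπdef
  have hπ : ∀ a : G.A, π a = a • x := fun _ => rfl
  have hsurjπ : Function.Surjective π := by
    intro m
    have hm : m ∈ Submodule.span G.A {x} := hxspan ▸ Submodule.mem_top
    obtain ⟨a, ha⟩ := Submodule.mem_span_singleton.mp hm
    exact ⟨a, ha⟩
  set gm : G.A →ₗ[G.A] Y.M := LinearMap.toSpanSingleton G.A Y.M (G.tp • y) with hgmdef
  have hgm : ∀ a : G.A, gm a = (a * G.tp) • y := fun a => (mul_smul a G.tp y).symm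
  -- the rv + m = 1 decomposition
  obtain ⟨r, mv, hmv, hrv⟩ := hlam.exists_inv hv
  -- kernel inclusions
  have hker1 : ∀ a : G.A, a • x = 0 → gm a = 0 := by
    intro a ha
    have haS : a ∈ S := (hxann a).mp ha
    have : a * G.tp ∈ T := claim1 a haS
    rw [hgm]
    exact (hyann _).mpr this
  have hker2 : ∀ a : G.A, gm a = 0 → a • x = 0 := by
    intro a ha
    rw [hgm] at ha
    have h1 : a * G.tp ∈ T := (hyann _).mp ha
    have h2 : a * G.tp * G.tm ∈ S := claim2 _ h1
    rw [mul_assoc, G.rel4] at h2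
    have h3 : a * G.emb v * G.emb r ∈ S := claim3 _ h2 r
    have h4 : a * G.emb mv ∈ S := by
      rw [← smul_eq_mul]
      exact S.smul_mem a (Submodule.subset_span ⟨mv, hmv, rfl⟩)
    have h5 : a ∈ S := by
      have : a = a * G.emb v * G.emb r + a * G.emb mv := by
        rw [mul_assoc, ← map_mul, ← mul_add, ← map_add]
        rw [show v * r + mv = 1 by rw [mul_comm]; exact hrv]
        rw [map_one, mul_one]
      rw [this]
      exact S.add_mem h3 h4
    exact (hxann a).mpr h5
  -- construct the map
  have hker : LinearMap.ker π ≤ LinearMap.ker gm := by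
    intro a ha
    exact LinearMap.mem_ker.mpr (hker1 a (LinearMap.mem_ker.mp ha))
  set e := π.quotKerEquivOfSurjective hsurjπ with he
  set f : X.M →ₗ[G.A] Y.M :=
    ((LinearMap.ker π).liftQ gm hker).comp e.symm.toLinearMap with hf
  have key : ∀ a : G.A, f (a • x) = (a * G.tp) • y := by
    intro a
    have h1 : e (Submodule.Quotient.mk a) = a • x := rfl
    have h2 : e.symm (a • x) = Submodule.Quotient.mk a := by
      rw [LinearEquiv.symm_apply_eq, h1]
    simp only [hf, LinearMap.comp_apply, LinearEquiv.coe_toLinearMap, h2,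
      Submodule.liftQ_apply]
    exact hgm a
  refine ⟨⟨f, ?_⟩, ?_, ?_⟩
  · -- degree condition
    intro i m hm
    obtain ⟨a, ha⟩ := hsurjπ m
    rw [hπ] at ha
    obtain ⟨b, hb, hbx⟩ := homog_rep X hx0 hm ha
    have : f m = b • (G.tp • y) := by rw [← hbx, key, mul_smul]
    rw [this]
    exact Y.smul_mem hb hty
  · -- injective
    intro m₁ m₂ hfm
    obtain ⟨a₁, rfl⟩ := hsurjπ m₁
    obtain ⟨a₂, rfl⟩ := hsurjπ m₂
    rw [hπ, hπ] at hfm ⊢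
    rw [key, key] at hfm
    have hz : gm (a₁ - a₂) = 0 := by
      rw [hgm, sub_mul, sub_smul, hfm, sub_self]
    have := hker2 _ hz
    rw [sub_smul, sub_eq_zero] at this
    exact this
  · -- surjective
    intro z
    -- first, y is in the range of f
    have hymem : ∀ a : G.A, a • y = f ((a * (G.emb (σ r) * G.tm)) • x) := by
      intro a
      rw [key]
      have hsm : G.emb (σ mv) • y = 0 := by
        apply (hyann _).mpr
        exact Submodule.subset_span ⟨σ mv, Ideal.mem_map_of_mem _ hmv, rfl⟩
      have hone : G.emb (σ r * σ v) • y = y := by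
        have h1 : σ r * σ v + σ mv = 1 := by
          rw [← map_mul, ← map_add, hrv, map_one]
        have : G.emb (σ r * σ v) • y + G.emb (σ mv) • y = y := by
          rw [← add_smul, ← map_add, h1, map_one, one_smul]
        rw [hsm, add_zero] at this
        exact this
      calc a • y = a • (G.emb (σ r * σ v) • y) := by rw [hone]
        _ = (a * (G.emb (σ r) * G.tm) * G.tp) • y := by
            rw [map_mul, mul_assoc, mul_assoc, G.rel3]
            simp [mul_smul]
    have hz : z ∈ Submodule.span G.A {y} := hyspan ▸ Submodule.mem_top
    obtain ⟨a, ha⟩ := Submodule.mem_span_singleton.mp hz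
    exact ⟨(a * (G.emb (σ r) * G.tm)) • x, by rw [← hymem a, ha]⟩
end
end

section
/- If M is a finitely generated, Artinian, graded A-module, then there exists N ∈ ℕ such that dim_ℂ M_n ≤ N for all n ∈ ℤ. -/
noncomputable section

variable {R : Type} [CommRing R] [Algebra ℂ R] {σ : R ≃ₐ[ℂ] R} {v : R}

variable {G : GWA R σ v}

section Aux

variable {R : Type} [CommRing R] [Algebra ℂ R] {σ : R ≃ₐ[ℂ] R} {v : R} {G : GWA R σ v}

namespace GWA

lemma one_mem_deg0 (G : GWA R σ v) : (1 : G.A) ∈ G.deg 0 := by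
  simpa using G.algmap_mem 1

lemma tp_pow_mem (G : GWA R σ v) (k : ℕ) : G.tp ^ k ∈ G.deg (k : ℤ) := by
  induction k with
  | zero => simpa using G.one_mem_deg0
  | succ k ih =>
    have hc : ((k+1 : ℕ) : ℤ) = (k:ℤ) + 1 := by push_cast; ring
    rw [pow_succ, hc]
    exact G.mul_mem ih G.tp_mem

lemma tm_pow_mem (G : GWA R σ v) (k : ℕ) : G.tm ^ k ∈ G.deg (-(k : ℤ)) := by
  induction k with
  | zero => simpa using G.one_mem_deg0
  | succ k ih =>
    have hc : (-((k+1 : ℕ) : ℤ)) = (-(k:ℤ)) + (-1) := by push_cast; ring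
    rw [pow_succ, hc]
    exact G.mul_mem ih G.tm_mem

lemma mem_deg0 (G : GWA R σ v) {a : G.A} (ha : a ∈ G.deg 0) : ∃ r : R, a = G.emb r := by
  obtain ⟨r, hr, -⟩ := G.free_pos 0 a (by simpa using ha)
  exact ⟨r, by simpa using hr⟩

end GWA

/-- Regrouping a finite combination of homogeneous elements by total degree. -/
lemma combo_decomp {X : GradedMod G} {ι : Type} (J : Finset ι) (u : ι → X.M) (e : ι → ℤ)
    (a : ι → G.A) :
    ∃ (s : Finset ℤ) (b : ℤ → ι → G.A),
      (∀ k j, b k j ∈ G.deg (k - e j)) ∧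
      ∑ j ∈ J, a j • u j = ∑ k ∈ s, ∑ j ∈ J, b k j • u j := by
  classical
  choose sf gf hgmem hgsum using fun j => G.decomp (a j)
  refine ⟨J.biUnion (fun j => (sf j).image (· + e j)),
    fun k j => if k - e j ∈ sf j then gf j (k - e j) else 0, ?_, ?_⟩
  · intro k j
    by_cases h : k - e j ∈ sf j
    · simpa [h] using hgmem j (k - e j)
    · simp only [h, if_false]; exact zero_mem _
  · rw [Finset.sum_comm]
    refine Finset.sum_congr rfl fun j hj => ?_
    have hsub : (sf j).image (· + e j) ⊆ J.biUnion (fun j => (sf j).image (· + e j)) :=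
      Finset.subset_biUnion_of_mem (fun j => (sf j).image (· + e j)) hj
    rw [← Finset.sum_subset hsub (by
      intro k hk hk'
      have : ¬ (k - e j ∈ sf j) := by
        intro hmem
        exact hk' (Finset.mem_image.mpr ⟨k - e j, hmem, by ring⟩)
      simp [this])]
    rw [Finset.sum_image (by intro x _ y _ h; exact add_right_cancel h)]
    have : ∀ i ∈ sf j, (if i + e j - e j ∈ sf j then gf j (i + e j - e j) else 0) • u j
        = gf j i • u j := by
      intro i hi
      simp only [add_sub_cancel_right, hi, if_true]
    rw [Finset.sum_congr rfl this, ← Finset.sum_smul, ← hgsum j]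

end Aux
section Aux2

variable {R : Type} [CommRing R] [Algebra ℂ R] {σ : R ≃ₐ[ℂ] R} {v : R} {G : GWA R σ v}

/-- Projection of a homogeneous combination onto homogeneous coefficients. -/
lemma proj_homog {X : GradedMod G} {ι : Type} (J : Finset ι) (u : ι → X.M) (e : ι → ℤ)
    (hu : ∀ j ∈ J, u j ∈ X.deg (e j)) (a : ι → G.A) {n : ℤ} {x : X.M}
    (hx : x ∈ X.deg n) (hxe : x = ∑ j ∈ J, a j • u j) :
    ∃ b : ι → G.A, (∀ j, b j ∈ G.deg (n - e j)) ∧ x = ∑ j ∈ J, b j • u j := by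
  classical
  obtain ⟨s, b₀, hb₀, hid⟩ := combo_decomp J u e a
  set w : ℤ → X.M := fun k => ∑ j ∈ J, b₀ k j • u j with hw
  have hwmem : ∀ k, w k ∈ X.deg k := by
    intro k
    refine AddSubgroup.sum_mem _ fun j hj => ?_
    have := X.smul_mem (hb₀ k j) (hu j hj)
    simpa [sub_add_cancel] using this
  have hxs : x = ∑ k ∈ s, w k := by rw [hxe, hid]
  set φ : ℤ → X.M := fun k => (if k ∈ s then w k else 0) - (if k = n then x else 0) with hφ
  have hφmem : ∀ k, φ k ∈ X.deg k := by
    intro k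
    refine sub_mem ?_ ?_
    · split
      · exact hwmem k
      · exact zero_mem _
    · split
      · next h => rw [h]; exact hx
      · exact zero_mem _
  have hφsum : ∑ k ∈ s ∪ {n}, φ k = 0 := by
    rw [Finset.sum_sub_distrib]
    have h1 : ∑ k ∈ s ∪ {n}, (if k ∈ s then w k else 0) = ∑ k ∈ s, w k := by
      rw [Finset.sum_ite_mem, Finset.union_inter_cancel_left]
    have h2 : ∑ k ∈ s ∪ {n}, (if k = n then x else 0) = x := by
      rw [Finset.sum_ite_eq' (s ∪ {n}) n (fun _ => x)]
      simp
    rw [h1, h2, ← hxs, sub_self]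
  have hφ0 := X.indep (s ∪ {n}) φ hφmem hφsum n (by simp)
  have hxval : x = (if n ∈ s then w n else 0) := by
    have := sub_eq_zero.mp hφ0
    simp only [if_pos rfl] at this
    exact this.symm
  by_cases hns : n ∈ s
  · exact ⟨b₀ n, hb₀ n, by rw [hxval, if_pos hns]⟩
  · refine ⟨fun _ => 0, fun j => zero_mem _, ?_⟩
    rw [hxval, if_neg hns]
    simp

lemma span_isGradedSub (X : GradedMod G) (n : ℤ) (U : Set X.M) (hU : U ⊆ X.deg n) :
    IsGradedSub X (Submodule.span G.A U) := by
  classical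
  intro m hm
  rw [Submodule.mem_span_set'] at hm
  obtain ⟨p, f, gsub, hsum⟩ := hm
  obtain ⟨s, b, hb, hid⟩ := combo_decomp (G := G) (X := X) (Finset.univ : Finset (Fin p))
    (fun i => (gsub i : X.M)) (fun _ => n) f
  refine ⟨s, fun k => if k ∈ s then ∑ j, b k j • (gsub j : X.M) else 0, ?_, ?_, ?_⟩
  · intro k
    dsimp only
    split
    · refine AddSubgroup.sum_mem _ fun j _ => ?_
      have := X.smul_mem (hb k j) (hU (gsub j).2)
      simpa [sub_add_cancel] using this
    · exact zero_mem _
  · intro k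
    dsimp only
    split
    · exact Submodule.sum_mem _ fun j _ =>
        Submodule.smul_mem _ _ (Submodule.subset_span (gsub j).2)
    · exact zero_mem _
  · rw [← hsum, hid]
    exact Finset.sum_congr rfl fun k hk => by dsimp only; rw [if_pos hk]

lemma recovery (X : GradedMod G) [Module R X.M]
    (hRs : ∀ (r : R) (m : X.M), r • m = G.emb r • m)
    (U : Submodule R X.M) {n : ℤ} (hU : (U : Set X.M) ⊆ X.deg n)
    {x : X.M} (hx : x ∈ X.deg n) (hxs : x ∈ Submodule.span G.A (U : Set X.M)) : x ∈ U := by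
  rw [Submodule.mem_span_set'] at hxs
  obtain ⟨p, f, gsub, hsum⟩ := hxs
  obtain ⟨b, hb, hx'⟩ := proj_homog (Finset.univ : Finset (Fin p))
    (fun i => (gsub i : X.M)) (fun _ => n) (fun j _ => hU (gsub j).2) f hx hsum.symm
  rw [hx']
  refine Submodule.sum_mem _ fun j _ => ?_
  obtain ⟨r, hr⟩ := G.mem_deg0 (a := b j) (by simpa using hb j)
  rw [hr, ← hRs]
  exact U.smul_mem _ (gsub j).2

end Aux2
/-- A finitely generated Artinian graded `A`-module has uniformly bounded
homogeneous components: `dim_ℂ M_n ≤ N` for all `n`.  (Here `X.M` is regarded as a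
`ℂ`-vector space compatibly with the `ℂ`-algebra structure of `A`, and the dimension of the
component `M_n` is the rank of its `ℂ`-linear span, which coincides with `M_n` itself.) -/
theorem stmt6 {R : Type} [CommRing R] [Algebra ℂ R] (hfg : Algebra.FiniteType ℂ R)
    {σ : R ≃ₐ[ℂ] R} {v : R} (G : GWA R σ v)
    (X : GradedMod G) [Module ℂ X.M]
    (hsc : ∀ (c : ℂ) (m : X.M), c • m = algebraMap ℂ G.A c • m)
    (hfgX : (⊤ : Submodule G.A X.M).FG) (hart : IsArtinianGr X) :
    ∃ N : ℕ, ∀ n : ℤ,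
      Module.rank ℂ ↥(Submodule.span ℂ ((X.deg n : Set X.M))) ≤ (N : Cardinal) := by
  classical
  letI : Module R X.M := Module.compHom X.M (G.emb.toRingHom : R →+* G.A)
  have hRs : ∀ (r : R) (m : X.M), r • m = G.emb r • m := fun r m => rfl
  have hCs : ∀ (c : ℂ) (m : X.M), c • m = ((algebraMap ℂ R c) : R) • m := by
    intro c m
    rw [hsc, hRs, AlgHom.commutes]
  letI hNR : IsNoetherianRing R := Algebra.FiniteType.isNoetherianRing ℂ R (h := hfg)
  -- homogeneous generators
  obtain ⟨S, hS⟩ := hfgX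
  choose ts gs hgmem hgsum using fun m : X.M => X.decomp m
  set P : Finset (ℤ × X.M) := S.biUnion (fun m => (ts m).image (fun i => (i, gs m i))) with hP
  have hPdeg : ∀ p ∈ P, p.2 ∈ X.deg p.1 := by
    intro p hp
    rw [hP, Finset.mem_biUnion] at hp
    obtain ⟨m, hm, hp⟩ := hp
    rw [Finset.mem_image] at hp
    obtain ⟨i, hi, rfl⟩ := hp
    exact hgmem m i
  have hPspan : ∀ x : X.M, x ∈ Submodule.span G.A (Prod.snd '' (P : Set (ℤ × X.M))) := by
    intro x
    have hx : x ∈ Submodule.span G.A (S : Set X.M) := by rw [hS]; trivial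
    refine Submodule.span_le.mpr ?_ hx
    intro m hm
    rw [SetLike.mem_coe, hgsum m]
    refine Submodule.sum_mem _ fun i hi => Submodule.subset_span ?_
    refine ⟨(i, gs m i), ?_, rfl⟩
    rw [Finset.mem_coe, hP, Finset.mem_biUnion]
    exact ⟨m, hm, Finset.mem_image.mpr ⟨i, hi, rfl⟩⟩
  set d : ℕ := P.sup (fun p => p.1.natAbs) with hd
  have hdP : ∀ p ∈ P, p.1.natAbs ≤ d := fun p hp => Finset.le_sup (f := fun p => p.1.natAbs) hp
  -- canonical representation of homogeneous elements
  have hrep : ∀ (n : ℤ) (x : X.M), x ∈ X.deg n →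
      ∃ (p : ℕ) (q : Fin p → ℤ × X.M) (b : Fin p → G.A),
        (∀ j, q j ∈ P) ∧ (∀ j, b j ∈ G.deg (n - (q j).1)) ∧ x = ∑ j, b j • (q j).2 := by
    intro n x hx
    obtain ⟨p, f, gsub, hsum⟩ := Submodule.mem_span_set'.mp (hPspan x)
    choose q hqP hq2 using fun j => (gsub j).2
    have hu : ∀ j ∈ (Finset.univ : Finset (Fin p)), (gsub j : X.M) ∈ X.deg ((q j).1) := by
      intro j _
      rw [← hq2 j]
      exact hPdeg (q j) (hqP j)
    obtain ⟨b, hb, hxe⟩ := proj_homog (Finset.univ : Finset (Fin p))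
      (fun i => (gsub i : X.M)) (fun i => (q i).1) hu f hx hsum.symm
    refine ⟨p, q, b, fun j => hqP j, hb, ?_⟩
    rw [hxe]
    exact Finset.sum_congr rfl fun j _ => by rw [hq2 j]
  -- the degree-n piece as an R-submodule
  have hdegR : ∀ (n : ℤ) (r : R) (m : X.M), m ∈ X.deg n → r • m ∈ X.deg n := by
    intro n r m hm
    rw [hRs]
    simpa using X.smul_mem (G.emb_mem r) hm
  set D : ℤ → Submodule R X.M := fun n =>
    { carrier := X.deg n
      add_mem' := fun h1 h2 => add_mem h1 h2
      zero_mem' := zero_mem _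
      smul_mem' := fun r m hm => hdegR n r m hm } with hD
  have hDmem : ∀ (n : ℤ) (x : X.M), x ∈ D n ↔ x ∈ X.deg n := fun n x => Iff.rfl
  -- D n is finitely generated over R
  have hDfg : ∀ n : ℤ, (D n).FG := by
    intro n
    set τ : ℤ × X.M → G.A := fun p =>
      if 0 ≤ n - p.1 then G.tp ^ (n - p.1).toNat else G.tm ^ (p.1 - n).toNat with hτ
    have hτdeg : ∀ p ∈ P, τ p • p.2 ∈ X.deg n := by
      intro p hp
      have h2 := hPdeg p hp
      by_cases hc : 0 ≤ n - p.1
      · have : τ p ∈ G.deg (n - p.1) := by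
          rw [hτ]
          simp only [hc, if_true]
          have := G.tp_pow_mem (n - p.1).toNat
          rwa [Int.toNat_of_nonneg hc] at this
        simpa [sub_add_cancel] using X.smul_mem this h2
      · have : τ p ∈ G.deg (n - p.1) := by
          rw [hτ]
          simp only [hc, if_false]
          have := G.tm_pow_mem (p.1 - n).toNat
          rwa [Int.toNat_of_nonneg (by omega), neg_sub] at this
        simpa [sub_add_cancel] using X.smul_mem this h2
    refine ⟨P.image (fun p => τ p • p.2), ?_⟩
    apply le_antisymm
    · rw [Submodule.span_le]
      intro y hy
      rw [Finset.coe_image, Set.mem_image] at hy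
      obtain ⟨p, hp, rfl⟩ := hy
      exact hτdeg p hp
    · intro x hx
      rw [hDmem] at hx
      obtain ⟨p, q, b, hqP, hb, hxe⟩ := hrep n x hx
      rw [hxe]
      refine Submodule.sum_mem _ fun j _ => ?_
      have hmemgen : τ (q j) • (q j).2 ∈
          (↑(P.image (fun p => τ p • p.2)) : Set X.M) := by
        rw [Finset.coe_image]
        exact ⟨q j, hqP j, rfl⟩
      by_cases hc : 0 ≤ n - (q j).1
      · obtain ⟨r, hr, -⟩ := G.free_pos (n - (q j).1).toNat (b j)
          (by rw [Int.toNat_of_nonneg hc]; exact hb j)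
        rw [hr, mul_smul, ← hRs]
        refine Submodule.smul_mem _ _ (Submodule.subset_span ?_)
        have : G.tp ^ (n - (q j).1).toNat = τ (q j) := by rw [hτ]; simp only [hc, if_true]
        rw [this]
        exact hmemgen
      · obtain ⟨r, hr, -⟩ := G.free_neg ((q j).1 - n).toNat (b j)
          (by rw [Int.toNat_of_nonneg (by omega), neg_sub]; exact hb j)
        rw [hr, mul_smul, ← hRs]
        refine Submodule.smul_mem _ _ (Submodule.subset_span ?_)
        have : G.tm ^ ((q j).1 - n).toNat = τ (q j) := by rw [hτ]; simp only [hc, if_false]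
        rw [this]
        exact hmemgen
  -- D n is Artinian over R
  have hDart : ∀ n : ℤ, IsArtinian R ↥(D n) := by
    intro n
    rw [← monotone_stabilizes_iff_artinian]
    intro f
    set U : ℕ → Submodule R X.M := fun j =>
      ((OrderDual.ofDual (f j) : Submodule R ↥(D n))).map (D n).subtype with hU
    have hUle : ∀ j, (U j : Set X.M) ⊆ X.deg n := by
      intro j x hx
      rw [hU] at hx
      obtain ⟨y, -, rfl⟩ := hx
      exact y.2
    have hUmono : ∀ j, U (j + 1) ≤ U j := by
      intro j
      refine Submodule.map_mono ?_
      exact f.monotone (Nat.le_succ j)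
    set Φ : ℕ → Submodule G.A X.M := fun j => Submodule.span G.A (U j : Set X.M) with hΦ
    obtain ⟨N, hN⟩ := hart Φ (fun j => span_isGradedSub X n _ (hUle j))
      (fun j => Submodule.span_mono (hUmono j))
    refine ⟨N, fun m hm => ?_⟩
    have hUeq : U N = U m := by
      ext x
      constructor
      · intro hx
        exact recovery X hRs (U m) (hUle m) (hUle N hx)
          (by show x ∈ Φ m; rw [hN m hm]; exact Submodule.subset_span hx)
      · intro hx
        exact recovery X hRs (U N) (hUle N) (hUle m hx)
          (by show x ∈ Φ N; rw [← hN m hm]; exact Submodule.subset_span hx)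
    have : OrderDual.ofDual (f N) = OrderDual.ofDual (f m) :=
      Submodule.map_injective_of_injective (Submodule.injective_subtype (D n)) hUeq
    exact congrArg OrderDual.toDual this
  have hDnoe : ∀ n : ℤ, IsNoetherian R ↥(D n) := fun n =>
    isNoetherian_of_fg_of_noetherian _ (hDfg n)
  -- complex submodule attached to an R-submodule
  set cSub : Submodule R X.M → Submodule ℂ X.M := fun W =>
    { carrier := W
      add_mem' := fun h1 h2 => W.add_mem h1 h2
      zero_mem' := W.zero_mem
      smul_mem' := fun c m hm => by
        simp only [Set.mem_setOf_eq, SetLike.mem_coe] at hm ⊢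
        rw [hCs]
        exact W.smul_mem _ hm } with hcSub
  have hcSubMem : ∀ (W : Submodule R X.M) (x : X.M), x ∈ cSub W ↔ x ∈ W := fun W x => Iff.rfl
  -- Zariski's lemma
  have hzar : ∀ m : Ideal R, m.IsMaximal → FiniteDimensional ℂ (R ⧸ m) := by
    intro m hm
    letI : Field (R ⧸ m) := Ideal.Quotient.field m
    haveI : Algebra.FiniteType ℂ (R ⧸ m) :=
      haveI := hfg; Algebra.FiniteType.of_surjective (Ideal.Quotient.mkₐ ℂ m)
        (Ideal.Quotient.mkₐ_surjective ℂ m)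
    exact finite_of_finite_type_of_isJacobsonRing ℂ (R ⧸ m)
  -- main finiteness claim
  have hfinD : ∀ n : ℤ, FiniteDimensional ℂ ↥(cSub (D n)) := by
    intro n
    letI := hDart n
    letI := hDnoe n
    have key : ∀ N : Submodule R ↥(D n),
        FiniteDimensional ℂ ↥(cSub (N.map (D n).subtype)) := by
      intro N
      induction N using WellFoundedLT.induction with
      | _ N IH =>
      by_cases hbot : N = ⊥
      · subst hbot
        have : (⊥ : Submodule R ↥(D n)).map (D n).subtype = ⊥ := Submodule.map_bot _
        rw [this]
        have hb : cSub ⊥ = ⊥ := by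
          apply le_antisymm
          · intro x hx
            rw [hcSubMem] at hx
            simpa using hx
          · intro x hx
            simp only [Submodule.mem_bot] at hx
            rw [hcSubMem, hx]
            exact zero_mem _
        rw [hb]
        infer_instance
      · obtain ⟨K, hKlt, hKmax⟩ :=
          set_has_maximal_iff_noetherian.mpr (hDnoe n) {K | K < N} ⟨⊥, Ne.bot_lt hbot⟩
        obtain ⟨x, hxN, hxK⟩ := SetLike.exists_of_lt (show K < N from hKlt)
        have hmaxcon : ∀ W : Submodule R ↥(D n), K < W → W ≤ N → W = N := by
          intro W hKW hWN
          rcases lt_or_eq_of_le hWN with h | h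
          · exact absurd hKW (hKmax W h)
          · exact h
        have hKN : K ⊔ Submodule.span R {x} = N := by
          refine hmaxcon _ ?_ (sup_le hKlt.le ((Submodule.span_singleton_le_iff_mem x N).mpr hxN))
          refine lt_of_le_of_ne le_sup_left ?_
          intro h
          exact hxK (h ▸ (le_sup_right : Submodule.span R {x} ≤ K ⊔ _)
            (Submodule.mem_span_singleton_self x))
        set mI : Ideal R := Submodule.comap (LinearMap.toSpanSingleton R ↥(D n) x) K with hmI
        have hmImem : ∀ r : R, r ∈ mI ↔ r • x ∈ K := by
          intro r
          rw [hmI, Submodule.mem_comap, LinearMap.toSpanSingleton_apply]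
        have hmImax : mI.IsMaximal := by
          constructor
          constructor
          · intro h
            have : (1 : R) ∈ mI := h ▸ Submodule.mem_top
            rw [hmImem, one_smul] at this
            exact hxK this
          · intro I hI
            obtain ⟨r₀, hr₀I, hr₀m⟩ := SetLike.exists_of_lt hI
            have hr₀K : ¬ r₀ • x ∈ K := fun h => hr₀m ((hmImem r₀).mpr h)
            have hW : K ⊔ Submodule.span R {r₀ • x} = N := by
              refine hmaxcon _ ?_ (sup_le hKlt.le
                ((Submodule.span_singleton_le_iff_mem _ N).mpr (N.smul_mem r₀ hxN)))
              refine lt_of_le_of_ne le_sup_left ?_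
              intro h
              exact hr₀K (h ▸ (le_sup_right : Submodule.span R {r₀ • x} ≤ K ⊔ _)
                (Submodule.mem_span_singleton_self _))
            have hxW : x ∈ K ⊔ Submodule.span R {r₀ • x} := hW ▸ hxN
            rw [Submodule.mem_sup] at hxW
            obtain ⟨k, hk, y, hy, hxy⟩ := hxW
            rw [Submodule.mem_span_singleton] at hy
            obtain ⟨r₁, rfl⟩ := hy
            have h1 : (1 - r₁ * r₀) • x ∈ K := by
              have hkeq : k = x - r₁ • (r₀ • x) := eq_sub_of_add_eq hxy
              have heq : (1 - r₁ * r₀) • x = k := by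
                rw [sub_smul, one_smul, mul_smul, hkeq]
              rw [heq]
              exact hk
            have h2 : (1 : R) - r₁ * r₀ ∈ I := hI.le ((hmImem _).mpr h1)
            have h3 : r₁ * r₀ ∈ I := I.mul_mem_left r₁ hr₀I
            rw [Ideal.eq_top_iff_one]
            have := I.add_mem h2 h3
            simpa using this
        haveI : FiniteDimensional ℂ (R ⧸ mI) := hzar mI hmImax
        obtain ⟨T, hT⟩ : ∃ T : Finset (R ⧸ mI),
            Submodule.span ℂ (T : Set (R ⧸ mI)) = ⊤ := by
          obtain ⟨T, hT⟩ := Module.finite_def.mp ‹FiniteDimensional ℂ (R ⧸ mI)›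
          exact ⟨T, hT⟩
        choose ρ hρ using fun t : R ⧸ mI => Ideal.Quotient.mk_surjective t
        -- the finite complex spanning set
        set E : Finset X.M := T.image (fun t => (ρ t : R) • ((x : ↥(D n)) : X.M)) with hE
        have hle : cSub (N.map (D n).subtype) ≤
            cSub (K.map (D n).subtype) ⊔ Submodule.span ℂ (E : Set X.M) := by
          intro z hz
          rw [hcSubMem, Submodule.mem_map] at hz
          obtain ⟨y, hyN, rfl⟩ := hz
          have hyKx : y ∈ K ⊔ Submodule.span R {x} := hKN.symm ▸ hyN
          rw [Submodule.mem_sup] at hyKx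
          obtain ⟨k, hk, w, hw, hyw⟩ := hyKx
          rw [Submodule.mem_span_singleton] at hw
          obtain ⟨r, rfl⟩ := hw
          -- expand r over the complex basis of R/mI
          have hmk : Ideal.Quotient.mk mI r ∈ Submodule.span ℂ (T : Set (R ⧸ mI)) := by
            rw [hT]; trivial
          rw [Submodule.mem_span_finset] at hmk
          obtain ⟨c, -, hc⟩ := hmk
          set r' : R := r - ∑ t ∈ T, algebraMap ℂ R (c t) * ρ t with hr'
          have hr'm : r' ∈ mI := by
            have : Ideal.Quotient.mk mI r' = 0 := by
              rw [hr', map_sub, map_sum]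
              rw [← hc]
              rw [sub_eq_zero]
              refine (Finset.sum_congr rfl fun t ht => ?_).symm
              rw [map_mul, hρ t, Algebra.smul_def]
              rfl
            rwa [Ideal.Quotient.eq_zero_iff_mem] at this
          have hsplit : y = (k + r' • x) + ∑ t ∈ T, (algebraMap ℂ R (c t) * ρ t) • x := by
            rw [hr', sub_smul, Finset.sum_smul, ← hyw]
            abel
          rw [hsplit]
          refine Submodule.add_mem _ ?_ ?_
          · apply Submodule.mem_sup_left
            rw [hcSubMem, Submodule.mem_map]
            exact ⟨_, K.add_mem hk ((hmImem r').mp hr'm), rfl⟩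
          · apply Submodule.mem_sup_right
            have : ((∑ t ∈ T, (algebraMap ℂ R (c t) * ρ t) • x : ↥(D n)) : X.M)
                = ∑ t ∈ T, c t • ((ρ t : R) • ((x : ↥(D n)) : X.M)) := by
              push_cast
              refine Finset.sum_congr rfl fun t ht => ?_
              rw [mul_smul]
              exact (hCs _ _).symm
            rw [this]
            refine Submodule.sum_mem _ fun t ht => ?_
            refine Submodule.smul_mem _ _ (Submodule.subset_span ?_)
            rw [hE, Finset.coe_image]
            exact ⟨t, ht, rfl⟩
        haveI h1 : FiniteDimensional ℂ ↥(cSub (K.map (D n).subtype)) := IH K hKlt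
        haveI h2 : FiniteDimensional ℂ ↥(Submodule.span ℂ (E : Set X.M)) :=
          FiniteDimensional.span_of_finite ℂ E.finite_toSet
        exact Submodule.finiteDimensional_of_le hle
    have := key ⊤
    rwa [Submodule.map_top, Submodule.range_subtype] at this
  -- identify the complex span of a component
  have hVD : ∀ n : ℤ, Submodule.span ℂ ((X.deg n : Set X.M)) = cSub (D n) := by
    intro n
    apply le_antisymm
    · rw [Submodule.span_le]
      intro x hx
      exact hx
    · intro x hx
      exact Submodule.subset_span hx
  have hVfin : ∀ n : ℤ, FiniteDimensional ℂ ↥(Submodule.span ℂ ((X.deg n : Set X.M))) := by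
    intro n
    rw [hVD n]
    exact hfinD n
  -- surjectivity of t₊ and t₋ in high degrees
  have hstep_pos : ∀ n : ℤ, (d : ℤ) + 1 ≤ n → ∀ x ∈ X.deg n,
      ∃ y ∈ X.deg (n - 1), x = G.tp • y := by
    intro n hn x hx
    obtain ⟨p, q, b, hqP, hb, hxe⟩ := hrep n x hx
    have hge : ∀ j, (1 : ℤ) ≤ n - (q j).1 := by
      intro j
      have := hdP (q j) (hqP j)
      omega
    choose r hr using fun j => (G.free_pos (n - (q j).1).toNat (b j)
      (by rw [Int.toNat_of_nonneg (by have := hge j; omega)]; exact hb j)).exists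
    refine ⟨∑ j, (G.emb (σ (r j)) * G.tp ^ ((n - (q j).1).toNat - 1)) • (q j).2, ?_, ?_⟩
    · refine AddSubgroup.sum_mem _ fun j _ => ?_
      have h1 : G.emb (σ (r j)) * G.tp ^ ((n - (q j).1).toNat - 1) ∈
          G.deg (0 + (((n - (q j).1).toNat - 1 : ℕ) : ℤ)) :=
        G.mul_mem (G.emb_mem _) (G.tp_pow_mem _)
      have h2 := X.smul_mem h1 (hPdeg (q j) (hqP j))
      have h4 := hge j
      have h3 : (0 + (((n - (q j).1).toNat - 1 : ℕ) : ℤ)) + (q j).1 = n - 1 := by omega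
      rwa [h3] at h2
    · rw [hxe, Finset.smul_sum]
      refine Finset.sum_congr rfl fun j _ => ?_
      rw [← mul_smul]
      have hk : (n - (q j).1).toNat = ((n - (q j).1).toNat - 1) + 1 := by
        have := hge j; omega
      have hbel : b j = G.tp * (G.emb (σ (r j)) * G.tp ^ ((n - (q j).1).toNat - 1)) := by
        rw [hr j]
        conv_lhs => rw [hk]
        rw [pow_succ', ← mul_assoc, G.rel1 (r j), mul_assoc]
      rw [hbel]
  have hstep_neg : ∀ n : ℤ, n ≤ -(d : ℤ) - 1 → ∀ x ∈ X.deg n,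
      ∃ y ∈ X.deg (n + 1), x = G.tm • y := by
    intro n hn x hx
    obtain ⟨p, q, b, hqP, hb, hxe⟩ := hrep n x hx
    have hge : ∀ j, (1 : ℤ) ≤ (q j).1 - n := by
      intro j
      have := hdP (q j) (hqP j)
      omega
    choose r hr using fun j => (G.free_neg ((q j).1 - n).toNat (b j)
      (by rw [Int.toNat_of_nonneg (by have := hge j; omega), neg_sub]; exact hb j)).exists
    refine ⟨∑ j, (G.emb (σ.symm (r j)) * G.tm ^ (((q j).1 - n).toNat - 1)) • (q j).2, ?_, ?_⟩
    · refine AddSubgroup.sum_mem _ fun j _ => ?_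
      have h1 : G.emb (σ.symm (r j)) * G.tm ^ (((q j).1 - n).toNat - 1) ∈
          G.deg (0 + -((((q j).1 - n).toNat - 1 : ℕ) : ℤ)) :=
        G.mul_mem (G.emb_mem _) (G.tm_pow_mem _)
      have h2 := X.smul_mem h1 (hPdeg (q j) (hqP j))
      have h4 := hge j
      have h3 : (0 + -((((q j).1 - n).toNat - 1 : ℕ) : ℤ)) + (q j).1 = n + 1 := by omega
      rwa [h3] at h2
    · rw [hxe, Finset.smul_sum]
      refine Finset.sum_congr rfl fun j _ => ?_
      rw [← mul_smul]
      have hk : ((q j).1 - n).toNat = ((((q j).1 - n).toNat - 1)) + 1 := by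
        have := hge j; omega
      have hcomm : G.emb (r j) * G.tm = G.tm * G.emb (σ.symm (r j)) := by
        have h := G.rel2 (σ.symm (r j))
        rwa [AlgEquiv.apply_symm_apply] at h
      have hbel : b j = G.tm * (G.emb (σ.symm (r j)) * G.tm ^ (((q j).1 - n).toNat - 1)) := by
        rw [hr j]
        conv_lhs => rw [hk]
        rw [pow_succ', ← mul_assoc, hcomm, mul_assoc]
      rw [hbel]
  -- rank comparisons
  have hrank_pos : ∀ n : ℤ, (d : ℤ) + 1 ≤ n →
      Module.rank ℂ ↥(Submodule.span ℂ ((X.deg n : Set X.M))) ≤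
      Module.rank ℂ ↥(Submodule.span ℂ ((X.deg (n - 1) : Set X.M))) := by
    intro n hn
    set L : ↥(Submodule.span ℂ ((X.deg (n - 1) : Set X.M))) →ₗ[ℂ] X.M :=
      { toFun := fun y => G.tp • (y : X.M)
        map_add' := by
          intro a b
          rw [Submodule.coe_add, smul_add]
        map_smul' := by
          intro c a
          simp only [RingHom.id_apply, SetLike.val_smul]
          rw [hsc, ← mul_smul, ← Algebra.commutes c G.tp, mul_smul, ← hsc] } with hL
    have hle : Submodule.span ℂ ((X.deg n : Set X.M)) ≤ LinearMap.range L := by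
      rw [Submodule.span_le]
      intro x hx
      obtain ⟨y, hy, hxy⟩ := hstep_pos n hn x hx
      exact ⟨⟨y, Submodule.subset_span hy⟩, hxy.symm⟩
    exact (Submodule.rank_mono hle).trans (rank_range_le L)
  have hrank_neg : ∀ n : ℤ, n ≤ -(d : ℤ) - 1 →
      Module.rank ℂ ↥(Submodule.span ℂ ((X.deg n : Set X.M))) ≤
      Module.rank ℂ ↥(Submodule.span ℂ ((X.deg (n + 1) : Set X.M))) := by
    intro n hn
    set L : ↥(Submodule.span ℂ ((X.deg (n + 1) : Set X.M))) →ₗ[ℂ] X.M :=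
      { toFun := fun y => G.tm • (y : X.M)
        map_add' := by
          intro a b
          rw [Submodule.coe_add, smul_add]
        map_smul' := by
          intro c a
          simp only [RingHom.id_apply, SetLike.val_smul]
          rw [hsc, ← mul_smul, ← Algebra.commutes c G.tm, mul_smul, ← hsc] } with hL
    have hle : Submodule.span ℂ ((X.deg n : Set X.M)) ≤ LinearMap.range L := by
      rw [Submodule.span_le]
      intro x hx
      obtain ⟨y, hy, hxy⟩ := hstep_neg n hn x hx
      exact ⟨⟨y, Submodule.subset_span hy⟩, hxy.symm⟩
    exact (Submodule.rank_mono hle).trans (rank_range_le L)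
  have hbound_pos : ∀ k : ℕ,
      Module.rank ℂ ↥(Submodule.span ℂ ((X.deg ((d : ℤ) + (k : ℤ)) : Set X.M))) ≤
      Module.rank ℂ ↥(Submodule.span ℂ ((X.deg ((d : ℤ)) : Set X.M))) := by
    intro k
    induction k with
    | zero =>
      have h0 : ((d : ℤ) + ((0 : ℕ) : ℤ)) = (d : ℤ) := by push_cast; ring
      rw [h0]
    | succ k ih =>
      have h1 := hrank_pos ((d : ℤ) + ((k + 1 : ℕ) : ℤ)) (by push_cast; omega)
      have h2 : ((d : ℤ) + ((k + 1 : ℕ) : ℤ)) - 1 = (d : ℤ) + (k : ℤ) := by push_cast; ring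
      rw [h2] at h1
      exact h1.trans ih
  have hbound_neg : ∀ k : ℕ,
      Module.rank ℂ ↥(Submodule.span ℂ ((X.deg (-(d : ℤ) - (k : ℤ)) : Set X.M))) ≤
      Module.rank ℂ ↥(Submodule.span ℂ ((X.deg (-(d : ℤ)) : Set X.M))) := by
    intro k
    induction k with
    | zero =>
      have h0 : (-(d : ℤ) - ((0 : ℕ) : ℤ)) = -(d : ℤ) := by push_cast; ring
      rw [h0]
    | succ k ih =>
      have h1 := hrank_neg (-(d : ℤ) - ((k + 1 : ℕ) : ℤ)) (by push_cast; omega)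
      have h2 : (-(d : ℤ) - ((k + 1 : ℕ) : ℤ)) + 1 = -(d : ℤ) - (k : ℤ) := by push_cast; ring
      rw [h2] at h1
      exact h1.trans ih
  set Nb : ℕ := (Finset.Icc (-(d : ℤ)) (d : ℤ)).sup
    (fun n => Module.finrank ℂ ↥(Submodule.span ℂ ((X.deg n : Set X.M)))) with hNb
  refine ⟨Nb, fun n => ?_⟩
  have hfin : ∀ m : ℤ, -(d : ℤ) ≤ m → m ≤ (d : ℤ) →
      Module.rank ℂ ↥(Submodule.span ℂ ((X.deg m : Set X.M))) ≤ (Nb : Cardinal) := by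
    intro m h1 h2
    haveI := hVfin m
    rw [← Module.finrank_eq_rank ℂ]
    refine Nat.cast_le.mpr ?_
    rw [hNb]
    exact Finset.le_sup
      (f := fun n => Module.finrank ℂ ↥(Submodule.span ℂ ((X.deg n : Set X.M))))
      (Finset.mem_Icc.mpr ⟨h1, h2⟩)
  rcases le_or_gt n (-(d : ℤ)) with hn | hn
  · have hk : n = -(d : ℤ) - (((-(d : ℤ) - n).toNat : ℕ) : ℤ) := by omega
    rw [hk]
    exact (hbound_neg _).trans (hfin (-(d : ℤ)) le_rfl (by omega))
  · rcases le_or_gt n (d : ℤ) with hn2 | hn2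
    · exact hfin n (by omega) hn2
    · have hk : n = (d : ℤ) + (((n - (d : ℤ)).toNat : ℕ) : ℤ) := by omega
      rw [hk]
      exact (hbound_pos _).trans (hfin (d : ℤ) (by omega) le_rfl)
end
end
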